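/- arXiv:1602.01045 — 6 statements merged into one kernel-verified Lean document; each statement's English description precedes it below -/
import Mathlib

section
/- Let q be a primitive l-th root of unity in a field K of characteristic 0, with l > 1 odd. In the q-Weyl algebra A_q with relation ∂x = q x ∂ + (q-1), the Euler operator α = 1 + x∂ satisfies αˡ = 1 + xˡ ∂ˡ. -/
/-- The defining relation of the `q`-Weyl algebra: `∂x = q x∂ + (q-1)·1`. -/
inductive qWeylRel (K : Type) [CommRing K] (q : K) :
    FreeAlgebra K (Fin 2) → FreeAlgebra K (Fin 2) → Prop
  | rel : qWeylRel K q (FreeAlgebra.ι K 1 * FreeAlgebra.ι K 0)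
      (q • (FreeAlgebra.ι K 0 * FreeAlgebra.ι K 1) + (q - 1) • (1 : FreeAlgebra K (Fin 2)))

/-- The `q`-Weyl algebra `A_q = K⟨x,∂⟩/(∂x - q x ∂ = q - 1)`. -/
abbrev qWeyl (K : Type) [CommRing K] (q : K) : Type := RingQuot (qWeylRel K q)

/-- The generator `x` of the `q`-Weyl algebra. -/
noncomputable def qX (K : Type) [CommRing K] (q : K) : qWeyl K q :=
  RingQuot.mkAlgHom K (qWeylRel K q) (FreeAlgebra.ι K 0)

/-- The generator `∂` of the `q`-Weyl algebra. -/
noncomputable def qD (K : Type) [CommRing K] (q : K) : qWeyl K q :=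
  RingQuot.mkAlgHom K (qWeylRel K q) (FreeAlgebra.ι K 1)



section aux
variable {K : Type} [CommRing K] (q : K)

lemma qWeyl_rel : qD K q * qX K q = q • (qX K q * qD K q) + (q - 1) • (1 : qWeyl K q) := by
  have h := RingQuot.mkAlgHom_rel K (qWeylRel.rel (K := K) (q := q))
  simpa [qX, qD, map_mul, map_add, map_smul, map_one] using h
end aux
section aux2
variable {K : Type} [CommRing K] (q : K)

lemma qD_mul_qX_pow (k : ℕ) : qD K q * (qX K q) ^ (k+1) =
    q ^ (k+1) • ((qX K q) ^ (k+1) * qD K q) + (q ^ (k+1) - 1) • (qX K q) ^ k := by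
  induction k with
  | zero => simpa using qWeyl_rel q
  | succ k ih =>
    have : qD K q * qX K q ^ (k+2) = (qD K q * qX K q ^ (k+1)) * qX K q := by
      rw [pow_succ, ← mul_assoc]
    rw [this, ih, add_mul, smul_mul_assoc, smul_mul_assoc, mul_assoc, qWeyl_rel q,
      ← pow_succ]
    simp only [mul_add, smul_add, smul_smul, ← mul_assoc, ← pow_succ, mul_one,
      mul_smul_comm, smul_mul_assoc, one_mul]
    rw [add_assoc, ← add_smul]
    ring_nf
end aux2
section aux3
variable {K : Type} [CommRing K] (q : K)
open Polynomial

lemma alpha_mul_E (k : ℕ) :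
    ((1 + qX K q * qD K q) - q ^ k • (1 : qWeyl K q)) * ((qX K q) ^ k * (qD K q) ^ k)
      = q ^ k • ((qX K q) ^ (k+1) * (qD K q) ^ (k+1)) := by
  cases k with
  | zero => simp
  | succ k =>
    have h1 : qX K q * qD K q * (qX K q ^ (k+1) * qD K q ^ (k+1))
        = qX K q * (qD K q * qX K q ^ (k+1)) * qD K q ^ (k+1) := by
      noncomm_ring
    rw [sub_mul, add_mul, one_mul, smul_mul_assoc, one_mul, h1, qD_mul_qX_pow]
    simp only [mul_add, add_mul, smul_mul_assoc, mul_smul_comm, smul_add, smul_smul]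
    have h2 : qX K q * (qX K q ^ (k+1) * qD K q) * qD K q ^ (k+1)
        = qX K q ^ (k+2) * qD K q ^ (k+2) := by
      rw [show qX K q * (qX K q ^ (k+1) * qD K q) * qD K q ^ (k+1)
          = (qX K q * qX K q ^ (k+1)) * (qD K q * qD K q ^ (k+1)) by noncomm_ring,
        ← pow_succ', ← pow_succ']
    have h3 : qX K q * qX K q ^ k * qD K q ^ (k+1) = qX K q ^ (k+1) * qD K q ^ (k+1) := by
      rw [pow_succ' (qX K q) k]
    rw [h2, h3]
    have hc : (1 : K) + (q ^ (k+1) - 1) - q ^ (k+1) = 0 := by ring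
    calc qX K q ^ (k+1) * qD K q ^ (k+1) +
          (q ^ (k+1) • (qX K q ^ (k+2) * qD K q ^ (k+2)) +
            (q ^ (k+1) - 1) • (qX K q ^ (k+1) * qD K q ^ (k+1))) -
          q ^ (k+1) • (qX K q ^ (k+1) * qD K q ^ (k+1))
        = ((1 : K) + (q ^ (k+1) - 1) - q ^ (k+1)) • (qX K q ^ (k+1) * qD K q ^ (k+1))
            + q ^ (k+1) • (qX K q ^ (k+2) * qD K q ^ (k+2)) := by
          module
      _ = q ^ (k+1) • (qX K q ^ (k+2) * qD K q ^ (k+2)) := by rw [hc, zero_smul, zero_add]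

lemma aeval_prod_alpha (k : ℕ) :
    Polynomial.aeval (1 + qX K q * qD K q)
        (∏ j ∈ Finset.range k, (X - C (q ^ j)) : K[X])
      = (∏ j ∈ Finset.range k, q ^ j) • ((qX K q) ^ k * (qD K q) ^ k) := by
  induction k with
  | zero => simp
  | succ k ih =>
    set α := 1 + qX K q * qD K q
    have hcomm : Polynomial.aeval α ((∏ j ∈ Finset.range k, (X - C (q ^ j))) * (X - C (q ^ k)))
        = Polynomial.aeval α ((X - C (q ^ k)) * ∏ j ∈ Finset.range k, (X - C (q ^ j))) := by
      rw [mul_comm]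
    rw [Finset.prod_range_succ, hcomm, map_mul, ih, map_sub, aeval_X, aeval_C,
      Algebra.algebraMap_eq_smul_one, mul_smul_comm, alpha_mul_E,
      Finset.prod_range_succ, smul_smul, mul_comm]
end aux3

/-- For `q` a primitive `l`-th root of unity (`l > 1` odd) in a field of characteristic zero,
the Euler operator `α = 1 + x∂` of the `q`-Weyl algebra satisfies `αˡ = 1 + xˡ∂ˡ`. -/
theorem stmt4 (K : Type) [Field K] [CharZero K]
    (l : ℕ) (hl : 1 < l) (hodd : Odd l) (q : K) (hq : IsPrimitiveRoot q l) :
    (1 + qX K q * qD K q) ^ l = 1 + (qX K q) ^ l * (qD K q) ^ l := by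
  classical
  have hl0 : 0 < l := by omega
  -- the polynomial identity ∏_{j<l} (X - q^j) = X^l - 1
  have himg : (Finset.range l).image (q ^ ·) = Polynomial.nthRootsFinset l (1 : K) := by
    apply Finset.eq_of_subset_of_card_le
    · intro z hz
      obtain ⟨i, _, rfl⟩ := Finset.mem_image.mp hz
      exact (Polynomial.mem_nthRootsFinset hl0 (1 : K)).2 (by
        rw [← pow_mul, mul_comm, pow_mul, hq.pow_eq_one, one_pow])
    · rw [hq.card_nthRootsFinset, Finset.card_image_of_injOn hq.injOn_pow,
        Finset.card_range]
  have hpoly : (Polynomial.X ^ l - 1 : Polynomial K)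
      = ∏ j ∈ Finset.range l, (Polynomial.X - Polynomial.C (q ^ j)) := by
    rw [Polynomial.X_pow_sub_one_eq_prod hl0 hq, ← himg,
      Finset.prod_image (fun x hx y hy h => hq.injOn_pow hx hy h)]
  have key := congrArg (Polynomial.aeval (1 + qX K q * qD K q)) hpoly
  rw [map_sub, map_pow, Polynomial.aeval_X, map_one, aeval_prod_alpha] at key
  -- the scalar ∏_{j<l} q^j equals 1
  have hscal : (∏ j ∈ Finset.range l, q ^ j) = 1 := by
    obtain ⟨m, hm⟩ := hodd
    have h2 : l - 1 = 2 * m := by omega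
    have h3 : l * (l - 1) / 2 = l * m := by
      rw [h2, Nat.mul_div_assoc l ⟨m, rfl⟩, Nat.mul_div_cancel_left m two_pos]
    rw [Finset.prod_pow_eq_pow_sum, Finset.sum_range_id, h3, pow_mul, hq.pow_eq_one, one_pow]
  rw [hscal, one_smul] at key
  exact sub_eq_iff_eq_add'.mp key
end

section
/- Let q be a primitive l-th root of unity (l > 1) in a field K of characteristic 0, and A_q the q-Weyl algebra with relation ∂x = q x ∂ + (q-1). Then the center of A_q equals the subalgebra K[xˡ, ∂ˡ] generated by xˡ and ∂ˡ. -/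
section Aux

variable {K : Type} [Field K] {q : K}

theorem qRel1 : qD K q * qX K q = q • (qX K q * qD K q) + (q - 1) • 1 := by
  have h := RingQuot.mkAlgHom_rel K (qWeylRel.rel (K := K) (q := q))
  simpa [qX, qD, map_mul, map_add, map_smul, map_one] using h

/-- `∂ xᵐ = qᵐ xᵐ ∂ + (qᵐ - 1) xᵐ⁻¹`. -/
theorem qDXpow (m : ℕ) :
    qD K q * (qX K q) ^ m =
      (q ^ m) • ((qX K q) ^ m * qD K q) + (q ^ m - 1) • (qX K q) ^ (m - 1) := by
  induction m with
  | zero => simp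
  | succ m ih =>
    have h1 : qD K q * qX K q ^ (m + 1) = (qD K q * qX K q ^ m) * qX K q := by
      rw [pow_succ, mul_assoc]
    rw [h1, ih, add_mul, smul_mul_assoc, smul_mul_assoc, mul_assoc, qRel1]
    have h2 : (m + 1) - 1 = m := rfl
    rw [h2]
    have h3 : qX K q ^ (m-1) * qX K q ^ 1 = qX K q ^ (m - 1 + 1) := (pow_add _ _ _).symm
    rcases Nat.eq_zero_or_pos m with hm | hm
    · subst hm; simp [qRel1]
    · have h4 : m - 1 + 1 = m := Nat.succ_pred_eq_of_pos hm
      have h5 : qX K q ^ (m-1) * qX K q = qX K q ^ m := by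
        rw [← pow_succ, h4]
      rw [h5]
      rw [mul_add, pow_succ, pow_succ]
      rw [mul_smul_comm, mul_smul_comm, smul_add, smul_smul, smul_smul, ← mul_assoc]
      simp only [mul_one]
      module

/-- `∂ⁿ x = qⁿ x ∂ⁿ + (qⁿ - 1) ∂ⁿ⁻¹`. -/
theorem qDpowX (n : ℕ) :
    (qD K q) ^ n * qX K q =
      (q ^ n) • (qX K q * (qD K q) ^ n) + (q ^ n - 1) • (qD K q) ^ (n - 1) := by
  induction n with
  | zero => simp
  | succ n ih =>
    have h1 : qD K q ^ (n + 1) * qX K q = qD K q * (qD K q ^ n * qX K q) := by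
      rw [pow_succ', mul_assoc]
    rw [h1, ih]
    have h2 : (n + 1) - 1 = n := rfl
    rw [h2]
    rcases Nat.eq_zero_or_pos n with hn | hn
    · subst hn; simp [qRel1]
    · have h4 : n - 1 + 1 = n := Nat.succ_pred_eq_of_pos hn
      have h5 : qD K q * qD K q ^ (n-1) = qD K q ^ n := by
        rw [← pow_succ', h4]
      rw [mul_add, mul_smul_comm, mul_smul_comm, ← mul_assoc, qRel1, add_mul,
        smul_mul_assoc, smul_mul_assoc, mul_assoc, ← pow_succ', one_mul, h5]
      rw [pow_succ' q, pow_succ']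
      rw [smul_add, smul_smul, smul_smul]
      module

theorem qGen : Algebra.adjoin K {qX K q, qD K q} = ⊤ := by
  rw [eq_top_iff]
  rintro z -
  obtain ⟨w, rfl⟩ := RingQuot.mkAlgHom_surjective K (qWeylRel K q) z
  induction w with
  | grade0 r =>
    rw [AlgHom.commutes]
    exact Subalgebra.algebraMap_mem _ r
  | grade1 i =>
    fin_cases i
    · exact Algebra.subset_adjoin (Set.mem_insert _ _)
    · exact Algebra.subset_adjoin (Set.mem_insert_of_mem _ rfl)
  | mul a b ha hb => rw [map_mul]; exact mul_mem ha hb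
  | add a b ha hb => rw [map_add]; exact add_mem ha hb

noncomputable def qbb (K : Type) [Field K] (q : K) : ℕ × ℕ → qWeyl K q :=
  fun p => (qX K q) ^ p.1 * (qD K q) ^ p.2

theorem qX_mul_bb (p : ℕ × ℕ) : qX K q * qbb K q p = qbb K q (p.1 + 1, p.2) := by
  simp only [qbb, ← mul_assoc, ← pow_succ']

theorem qbb_mul_D (p : ℕ × ℕ) : qbb K q p * qD K q = qbb K q (p.1, p.2 + 1) := by
  simp only [qbb, mul_assoc, ← pow_succ]

theorem qbb_mul_X (p : ℕ × ℕ) :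
    qbb K q p * qX K q =
      (q ^ p.2) • qbb K q (p.1 + 1, p.2) + (q ^ p.2 - 1) • qbb K q (p.1, p.2 - 1) := by
  show qX K q ^ p.1 * qD K q ^ p.2 * qX K q = _
  rw [mul_assoc, qDpowX, mul_add, mul_smul_comm, mul_smul_comm, ← mul_assoc, ← pow_succ]
  rfl

theorem qD_mul_bb (p : ℕ × ℕ) :
    qD K q * qbb K q p =
      (q ^ p.1) • qbb K q (p.1, p.2 + 1) + (q ^ p.1 - 1) • qbb K q (p.1 - 1, p.2) := by
  show qD K q * (qX K q ^ p.1 * qD K q ^ p.2) = _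
  rw [← mul_assoc, qDXpow, add_mul, smul_mul_assoc, smul_mul_assoc, mul_assoc, ← pow_succ']
  rfl

theorem qSpan : Submodule.span K (Set.range (qbb K q)) = ⊤ := by
  set S := Submodule.span K (Set.range (qbb K q)) with hS
  have hmem : ∀ p : ℕ × ℕ, qbb K q p ∈ S := fun p =>
    Submodule.subset_span (Set.mem_range_self p)
  have hX : ∀ a ∈ S, qX K q * a ∈ S := by
    intro a ha
    induction ha using Submodule.span_induction with
    | mem a h =>
      obtain ⟨p, rfl⟩ := h
      rw [qX_mul_bb]; exact hmem _
    | zero => simpa using S.zero_mem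
    | add a b _ _ ha hb => rw [mul_add]; exact S.add_mem ha hb
    | smul k a _ ha => rw [mul_smul_comm]; exact S.smul_mem k ha
  have hD : ∀ a ∈ S, qD K q * a ∈ S := by
    intro a ha
    induction ha using Submodule.span_induction with
    | mem a h =>
      obtain ⟨p, rfl⟩ := h
      rw [qD_mul_bb]
      exact S.add_mem (S.smul_mem _ (hmem _)) (S.smul_mem _ (hmem _))
    | zero => simpa using S.zero_mem
    | add a b _ _ ha hb => rw [mul_add]; exact S.add_mem ha hb
    | smul k a _ ha => rw [mul_smul_comm]; exact S.smul_mem k ha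
  have hDright : ∀ a ∈ S, a * qD K q ∈ S := by
    intro a ha
    induction ha using Submodule.span_induction with
    | mem a h =>
      obtain ⟨p, rfl⟩ := h
      rw [qbb_mul_D]; exact hmem _
    | zero => simpa using S.zero_mem
    | add a b _ _ ha hb => rw [add_mul]; exact S.add_mem ha hb
    | smul k a _ ha => rw [smul_mul_assoc]; exact S.smul_mem k ha
  -- `∂ⁿ xᵐ ∈ S`
  have hDX : ∀ n m : ℕ, (qD K q) ^ n * (qX K q) ^ m ∈ S := by
    intro n
    induction n with
    | zero =>
      intro m
      have : (qX K q) ^ m = qbb K q (m, 0) := by simp [qbb]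
      simpa [this] using hmem (m, 0)
    | succ n ih =>
      intro m
      have h1 : qD K q ^ (n+1) * qX K q ^ m = qD K q * (qD K q ^ n * qX K q ^ m) := by
        rw [pow_succ', mul_assoc]
      rw [h1]; exact hD _ (ih m)
  have hXpow : ∀ m : ℕ, ∀ a ∈ S, qX K q ^ m * a ∈ S := by
    intro m
    induction m with
    | zero => intro a ha; simpa using ha
    | succ k ih =>
      intro a ha
      rw [pow_succ', mul_assoc]
      exact hX _ (ih a ha)
  have hDrpow : ∀ n : ℕ, ∀ a ∈ S, a * qD K q ^ n ∈ S := by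
    intro n
    induction n with
    | zero => intro a ha; simpa using ha
    | succ k ih =>
      intro a ha
      rw [pow_succ, ← mul_assoc]
      exact hDright _ (ih a ha)
  have hmul : ∀ p r : ℕ × ℕ, qbb K q p * qbb K q r ∈ S := by
    intro p r
    have h1 : qbb K q p * qbb K q r =
        (qX K q) ^ p.1 * ((qD K q ^ p.2 * qX K q ^ r.1) * qD K q ^ r.2) := by
      simp only [qbb, mul_assoc]
    rw [h1]
    exact hXpow p.1 _ (hDrpow r.2 _ (hDX p.2 r.1))
  have hmulS : ∀ a ∈ S, ∀ b ∈ S, a * b ∈ S := by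
    intro a ha
    induction ha using Submodule.span_induction with
    | mem a h =>
      obtain ⟨p, rfl⟩ := h
      intro b hb
      induction hb using Submodule.span_induction with
      | mem b h' => obtain ⟨r, rfl⟩ := h'; exact hmul p r
      | zero => rw [mul_zero]; exact S.zero_mem
      | add b b' _ _ hb hb' => rw [mul_add]; exact S.add_mem hb hb'
      | smul k b _ hb => rw [mul_smul_comm]; exact S.smul_mem k hb
    | zero => intro b hb; rw [zero_mul]; exact S.zero_mem
    | add a a' _ _ ha ha' =>
      intro b hb; rw [add_mul]; exact S.add_mem (ha b hb) (ha' b hb)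
    | smul k a _ ha =>
      intro b hb; rw [smul_mul_assoc]; exact S.smul_mem k (ha b hb)
  rw [eq_top_iff]
  rintro z -
  have hz : z ∈ Algebra.adjoin K {qX K q, qD K q} := by rw [qGen]; trivial
  induction hz using Algebra.adjoin_induction with
  | mem a h =>
    rcases h with h | h
    · subst h
      have : qX K q = qbb K q (1, 0) := by simp [qbb]
      rw [this]; exact hmem _
    · rw [Set.mem_singleton_iff] at h; subst h
      have : qD K q = qbb K q (0, 1) := by simp [qbb]
      rw [this]; exact hmem _
  | algebraMap r =>
    have : algebraMap K (qWeyl K q) r = r • qbb K q (0, 0) := by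
      simp [qbb, Algebra.smul_def]
    rw [this]; exact S.smul_mem r (hmem _)
  | add a b _ _ ha hb => exact S.add_mem ha hb
  | mul a b _ _ ha hb => exact hmulS a ha b hb

/-- The coefficient `a_j = (λ+1) q^j - 1` used in the action of `∂`. -/
noncomputable def apol (q : K) (j : ℤ) : Polynomial K :=
  Polynomial.C (q ^ j) * Polynomial.X + Polynomial.C (q ^ j - 1)

theorem apol_ne_zero (hq0 : q ≠ 0) (j : ℤ) : apol q j ≠ 0 := by
  intro h
  have h1 : (apol q j).coeff 1 = q ^ j := by
    rw [apol, Polynomial.coeff_add, Polynomial.coeff_C_mul, Polynomial.coeff_X_one,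
      Polynomial.coeff_C]
    simp
  rw [h] at h1
  simp only [Polynomial.coeff_zero] at h1
  exact zpow_ne_zero j hq0 h1.symm

theorem apol_natDegree (hq0 : q ≠ 0) (j : ℤ) : (apol q j).natDegree = 1 :=
  Polynomial.natDegree_linear (zpow_ne_zero j hq0)

theorem apol_succ (hq0 : q ≠ 0) (j : ℤ) :
    apol q (j + 1) = Polynomial.C q * apol q j + Polynomial.C (q - 1) := by
  simp only [apol, zpow_add₀ hq0, zpow_one]
  rw [mul_add, ← mul_assoc, ← Polynomial.C_mul, ← Polynomial.C_mul, add_assoc,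
    ← Polynomial.C_add]
  congr 1
  · congr 1
    rw [Polynomial.C_inj]; ring
  · rw [Polynomial.C_inj]; ring

/-- The action of `x` : shift. -/
noncomputable def Xop (K : Type) [Field K] : (ℤ →₀ Polynomial K) →ₗ[K] (ℤ →₀ Polynomial K) :=
  Finsupp.lmapDomain (Polynomial K) K (· + 1)

/-- The action of `∂`. -/
noncomputable def Dop (K : Type) [Field K] (q : K) : (ℤ →₀ Polynomial K) →ₗ[K] (ℤ →₀ Polynomial K) :=
  Finsupp.lsum K fun j => (Finsupp.lsingle (j - 1)) ∘ₗ (LinearMap.mulLeft K (apol q j))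

theorem Xop_single (j : ℤ) (p : Polynomial K) :
    Xop K (Finsupp.single j p) = Finsupp.single (j + 1) p := by
  unfold Xop
  rw [Finsupp.lmapDomain_apply, Finsupp.mapDomain_single]

theorem Dop_single (j : ℤ) (p : Polynomial K) :
    Dop K q (Finsupp.single j p) = Finsupp.single (j - 1) (apol q j * p) := by
  unfold Dop
  rw [Finsupp.lsum_single, LinearMap.comp_apply, LinearMap.mulLeft_apply,
    Finsupp.lsingle_apply]

theorem EndRel (hq0 : q ≠ 0) :
    Dop K q * Xop K = q • (Xop K * Dop K q) + (q - 1) • (1 : Module.End K (ℤ →₀ Polynomial K)) := by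
  apply Finsupp.lhom_ext
  intro j p
  rw [Module.End.mul_apply, Xop_single, Dop_single]
  have hr : (q • (Xop K * Dop K q) + (q - 1) • (1 : Module.End K (ℤ →₀ Polynomial K))) (Finsupp.single j p)
      = q • (Xop K ((Dop K q) (Finsupp.single j p))) + (q - 1) • Finsupp.single j p := by
    simp [Module.End.mul_apply]
  rw [hr, Dop_single, Xop_single]
  have hj : j - 1 + 1 = j := by ring
  have hj2 : j + 1 - 1 = j := by ring
  rw [hj, hj2, Finsupp.smul_single, Finsupp.smul_single, ← Finsupp.single_add]
  congr 1
  rw [apol_succ hq0, add_mul, Polynomial.smul_eq_C_mul, Polynomial.smul_eq_C_mul, mul_assoc]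

/-- The representation `A_q → End((ℤ →₀ Polynomial K))`. -/
noncomputable def qRep (K : Type) [Field K] (q : K) (hq0 : q ≠ 0) :
    qWeyl K q →ₐ[K] Module.End K (ℤ →₀ Polynomial K) :=
  RingQuot.liftAlgHom K ⟨FreeAlgebra.lift K ![Xop K, Dop K q], by
    rintro x y ⟨⟩
    simp only [map_mul, map_add, map_smul, map_one, FreeAlgebra.lift_ι_apply,
      Matrix.cons_val_zero, Matrix.cons_val_one, Matrix.head_cons]
    exact EndRel hq0⟩

theorem qRep_X (hq0 : q ≠ 0) : qRep K q hq0 (qX K q) = Xop K := by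
  unfold qRep qX
  rw [RingQuot.liftAlgHom_mkAlgHom_apply, FreeAlgebra.lift_ι_apply]
  rfl

theorem qRep_D (hq0 : q ≠ 0) : qRep K q hq0 (qD K q) = Dop K q := by
  unfold qRep qD
  rw [RingQuot.liftAlgHom_mkAlgHom_apply, FreeAlgebra.lift_ι_apply]
  rfl

/-- Evaluation of the representation at the vector `t⁰`. -/
noncomputable def qEv (K : Type) [Field K] (q : K) (hq0 : q ≠ 0) :
    qWeyl K q →ₗ[K] (ℤ →₀ Polynomial K) where
  toFun z := qRep K q hq0 z (Finsupp.single (0 : ℤ) (1 : Polynomial K))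
  map_add' a b := by
    show qRep K q hq0 (a + b) _ = _
    rw [map_add]; rfl
  map_smul' k a := by
    show qRep K q hq0 (k • a) _ = _
    rw [map_smul]; rfl

noncomputable def cpol (q : K) (n : ℕ) : Polynomial K :=
  ∏ i ∈ Finset.range n, apol q (-(i : ℤ))

theorem Xop_pow_single (m : ℕ) (j : ℤ) (p : Polynomial K) :
    (Xop K ^ m) (Finsupp.single j p) = Finsupp.single (j + m) p := by
  induction m with
  | zero => simp
  | succ k ih =>
    rw [pow_succ', Module.End.mul_apply, ih, Xop_single]
    congr 1
    push_cast; ring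

theorem Dop_pow_single (n : ℕ) :
    ((Dop K q) ^ n) (Finsupp.single (0 : ℤ) (1 : Polynomial K)) =
      Finsupp.single (-(n : ℤ)) (cpol q n) := by
  induction n with
  | zero => simp [cpol]
  | succ k ih =>
    rw [pow_succ', Module.End.mul_apply, ih, Dop_single]
    have h1 : -(k : ℤ) - 1 = -((k : ℕ) + 1 : ℕ) := by push_cast; ring
    rw [h1]
    congr 1
    conv_rhs => rw [cpol]
    rw [Finset.prod_range_succ, mul_comm]
    rfl

theorem qEv_bb (hq0 : q ≠ 0) (p : ℕ × ℕ) :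
    qEv K q hq0 (qbb K q p) = Finsupp.single ((p.1 : ℤ) - p.2) (cpol q p.2) := by
  show qRep K q hq0 (qbb K q p) (Finsupp.single (0 : ℤ) (1 : Polynomial K)) = _
  rw [qbb, map_mul, map_pow, map_pow, qRep_X, qRep_D, Module.End.mul_apply,
    Dop_pow_single, Xop_pow_single]
  congr 1
  ring

theorem cpol_ne_zero (hq0 : q ≠ 0) (n : ℕ) : cpol q n ≠ 0 :=
  Finset.prod_ne_zero_iff.mpr fun _ _ => apol_ne_zero hq0 _

theorem cpol_natDegree (hq0 : q ≠ 0) (n : ℕ) : (cpol q n).natDegree = n := by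
  rw [cpol, Polynomial.natDegree_prod _ _ (fun i _ => apol_ne_zero hq0 _)]
  simp [apol_natDegree hq0]

theorem cpol_li (hq0 : q ≠ 0) : LinearIndependent K (cpol q) := by
  rw [linearIndependent_iff']
  intro s g hsum i hi
  by_contra hgi
  classical
  set T := s.filter (fun j => g j ≠ 0) with hT
  have hiT : i ∈ T := Finset.mem_filter.mpr ⟨hi, hgi⟩
  have hTne : T.Nonempty := ⟨i, hiT⟩
  set N := T.max' hTne with hN
  have hNT : N ∈ T := T.max'_mem hTne
  have hNs : N ∈ s := (Finset.mem_filter.mp hNT).1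
  have hgN : g N ≠ 0 := (Finset.mem_filter.mp hNT).2
  have hc : (∑ j ∈ s, g j • cpol q j).coeff N = 0 := by rw [hsum]; simp
  rw [Polynomial.finset_sum_coeff] at hc
  have hsingle : ∑ j ∈ s, (g j • cpol q j).coeff N = g N * (cpol q N).coeff N := by
    rw [Finset.sum_eq_single_of_mem N hNs]
    · rw [Polynomial.coeff_smul, smul_eq_mul]
    · intro j hj hjN
      rcases eq_or_ne (g j) 0 with h0 | h0
      · simp [h0]
      · have hjT : j ∈ T := Finset.mem_filter.mpr ⟨hj, h0⟩
        have hlt : j < N := lt_of_le_of_ne (T.le_max' j hjT) hjN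
        rw [Polynomial.coeff_smul, Polynomial.coeff_eq_zero_of_natDegree_lt, smul_zero]
        rw [cpol_natDegree hq0]
        exact hlt
  rw [hsingle] at hc
  have hlead : (cpol q N).coeff N ≠ 0 := by
    have := Polynomial.coeff_natDegree (p := cpol q N)
    rw [cpol_natDegree hq0] at this
    rw [this]
    exact Polynomial.leadingCoeff_ne_zero.mpr (cpol_ne_zero hq0 N)
  exact hgN (by
    rcases mul_eq_zero.mp hc with h | h
    · exact h
    · exact absurd h hlead)

theorem bb_li (hq0 : q ≠ 0) : LinearIndependent K (qbb K q) := by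
  have h1 : LinearIndependent K
      fun ix : Σ _ : ℤ, ℕ => Finsupp.single ix.1 (cpol q ix.2) :=
    Finsupp.linearIndependent_single (f := fun _ : ℤ => cpol q) fun _ => cpol_li hq0
  have hemb : Function.Injective
      (fun p : ℕ × ℕ => (⟨(p.1 : ℤ) - p.2, p.2⟩ : Σ _ : ℤ, ℕ)) := by
    intro p r h
    simp only [Sigma.mk.inj_iff, heq_eq_eq] at h
    obtain ⟨h1', h2'⟩ := h
    have hp1 : (p.1 : ℤ) = r.1 := by omega
    have : p.1 = r.1 := by exact_mod_cast hp1
    exact Prod.ext this h2'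
  have h2 := h1.comp _ hemb
  apply LinearIndependent.of_comp (qEv K q hq0)
  have heq : (qEv K q hq0) ∘ (qbb K q) =
      fun p : ℕ × ℕ => Finsupp.single ((p.1 : ℤ) - p.2) (cpol q p.2) :=
    funext fun p => qEv_bb hq0 p
  rw [heq]
  exact h2

noncomputable def qBasis (hq0 : q ≠ 0) : Module.Basis (ℕ × ℕ) K (qWeyl K q) :=
  Module.Basis.mk (bb_li hq0) (by rw [qSpan])

theorem qBasis_apply (hq0 : q ≠ 0) (p : ℕ × ℕ) : qBasis hq0 p = qbb K q p := by
  rw [qBasis, Module.Basis.coe_mk]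

theorem qBasis_repr_bb (hq0 : q ≠ 0) (p : ℕ × ℕ) :
    (qBasis (q := q) hq0).repr (qbb K q p) = Finsupp.single p 1 := by
  rw [← qBasis_apply hq0, Module.Basis.repr_self]

theorem qBasis_repr_sum (hq0 : q ≠ 0) (z : qWeyl K q) :
    z = Finsupp.sum ((qBasis (q := q) hq0).repr z) fun p cp => cp • qbb K q p := by
  conv_lhs => rw [← (qBasis (q := q) hq0).linearCombination_repr z]
  rw [Finsupp.linearCombination_apply]
  apply Finsupp.sum_congr
  intro p _
  rw [qBasis_apply]

theorem sum_helper1 (c : (ℕ × ℕ) →₀ K) (α : ℕ × ℕ → K) (σ : ℕ × ℕ → ℕ × ℕ)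
    (t p0 : ℕ × ℕ) (h : ∀ p, σ p = t → α p ≠ 0 → p = p0) (hp0 : σ p0 = t) :
    ∑ p ∈ c.support, c p * α p * (if σ p = t then 1 else 0) = c p0 * α p0 := by
  classical
  have hcong : ∀ p ∈ c.support, c p * α p * (if σ p = t then 1 else 0)
      = if p = p0 then c p * α p else 0 := by
    intro p _
    by_cases h1 : σ p = t
    · by_cases h2 : α p = 0
      · simp [h1, h2]
      · have hpp := h p h1 h2
        rw [if_pos h1, if_pos hpp, mul_one]
    · have hne : p ≠ p0 := fun e => h1 (e ▸ hp0)
      simp [h1, hne]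
  rw [Finset.sum_congr rfl hcong, Finset.sum_ite_eq' c.support p0 (fun p => c p * α p)]
  by_cases hp : p0 ∈ c.support
  · rw [if_pos hp]
  · rw [if_neg hp, Finsupp.notMem_support_iff.mp hp, zero_mul]

theorem sum_helper0 (c : (ℕ × ℕ) →₀ K) (α : ℕ × ℕ → K) (σ : ℕ × ℕ → ℕ × ℕ)
    (t : ℕ × ℕ) (h : ∀ p, σ p = t → α p = 0) :
    ∑ p ∈ c.support, c p * α p * (if σ p = t then 1 else 0) = 0 := by
  apply Finset.sum_eq_zero
  intro p _
  by_cases h1 : σ p = t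
  · rw [h p h1, mul_zero, zero_mul]
  · rw [if_neg h1, mul_zero]

theorem qCoeff (hq0 : q ≠ 0) (z : qWeyl K q) (α : ℕ × ℕ → K) (σ₁ σ₂ : ℕ × ℕ → ℕ × ℕ)
    (g : qWeyl K q)
    (hz : g * z = z * g)
    (hinner : ∀ p : ℕ × ℕ,
      g * qbb K q p - qbb K q p * g = α p • (qbb K q (σ₁ p) + qbb K q (σ₂ p)))
    (t : ℕ × ℕ) :
    (∑ p ∈ ((qBasis (q := q) hq0).repr z).support,
        ((qBasis (q := q) hq0).repr z) p * α p * (if σ₁ p = t then 1 else 0)) +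
      ∑ p ∈ ((qBasis (q := q) hq0).repr z).support,
        ((qBasis (q := q) hq0).repr z) p * α p * (if σ₂ p = t then 1 else 0) = 0 := by
  classical
  set c := (qBasis (q := q) hq0).repr z with hc
  have h0 : Finsupp.sum c
      (fun p cp => (cp * α p) • (qbb K q (σ₁ p) + qbb K q (σ₂ p))) = 0 := by
    have hstep : Finsupp.sum c
        (fun p cp => (cp * α p) • (qbb K q (σ₁ p) + qbb K q (σ₂ p)))
        = g * z - z * g := by
      conv_rhs => rw [qBasis_repr_sum hq0 z, ← hc]
      rw [Finsupp.mul_sum, Finsupp.sum_mul, ← Finsupp.sum_sub]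
      apply Finsupp.sum_congr
      intro p _
      simp only [mul_smul_comm, smul_mul_assoc]
      rw [mul_smul, ← hinner p, smul_sub]
    rw [hstep, hz, sub_self]
  have h1 : Finsupp.sum c
      (fun p cp => (cp * α p) • ((Finsupp.single (σ₁ p) (1:K))
        + Finsupp.single (σ₂ p) (1:K))) = 0 := by
    have := congrArg (qBasis (q := q) hq0).repr h0
    rw [map_finsuppSum, map_zero] at this
    rw [← this]
    apply Finsupp.sum_congr
    intro p _
    rw [map_smul, map_add, qBasis_repr_bb, qBasis_repr_bb]
  have h2 := congrArg (fun f : (ℕ × ℕ) →₀ K => f t) h1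
  simp only [Finsupp.sum_apply, Finsupp.coe_zero, Pi.zero_apply] at h2
  rw [Finsupp.sum] at h2
  have h3 : ∑ p ∈ c.support, (((c p * α p) • ((Finsupp.single (σ₁ p) (1:K))
        + Finsupp.single (σ₂ p) (1:K))) t)
      = ∑ p ∈ c.support, (c p * α p * (if σ₁ p = t then 1 else 0)
        + c p * α p * (if σ₂ p = t then 1 else 0)) := by
    apply Finset.sum_congr rfl
    intro p _
    rw [Finsupp.smul_apply, Finsupp.add_apply, Finsupp.single_apply, Finsupp.single_apply,
      smul_eq_mul, mul_add]
  rw [h3, Finset.sum_add_distrib] at h2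
  exact h2

/-- commutation with `x` forces coefficients with `q^n ≠ 1` to vanish -/
theorem qCoeffX (hq0 : q ≠ 0) (z : qWeyl K q) (hz : qX K q * z = z * qX K q) :
    ∀ m n : ℕ, ((qBasis (q := q) hq0).repr z) (m, n) * (1 - q ^ n) = 0 := by
  classical
  have hinner : ∀ p : ℕ × ℕ, qX K q * qbb K q p - qbb K q p * qX K q
      = (1 - q ^ p.2) • (qbb K q (p.1 + 1, p.2) + qbb K q (p.1, p.2 - 1)) := by
    intro p
    rw [qX_mul_bb, qbb_mul_X]
    module
  set c := (qBasis (q := q) hq0).repr z with hc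
  have key := qCoeff hq0 z (fun p => 1 - q ^ p.2)
    (fun p => (p.1 + 1, p.2)) (fun p => (p.1, p.2 - 1)) (qX K q) hz hinner
  have E0 : ∀ n : ℕ, c (0, n + 1) * (1 - q ^ (n + 1)) = 0 := by
    intro n
    have h := key (0, n)
    rw [sum_helper0 c _ _ _ (by
      intro p hp
      exfalso
      exact Nat.succ_ne_zero p.1 (congrArg Prod.fst hp))] at h
    rw [sum_helper1 c _ _ _ (0, n + 1) (by
      intro p hp hα
      have h1 : p.1 = 0 := congrArg Prod.fst hp
      have h2 : p.2 - 1 = n := congrArg Prod.snd hp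
      have h3 : p.2 ≠ 0 := by
        intro h4
        apply hα
        rw [h4, pow_zero, sub_self]
      have : p.2 = n + 1 := by omega
      rw [← h1, ← this]) (by simp)] at h
    rw [zero_add] at h
    exact h
  have E1 : ∀ m n : ℕ, c (m, n) * (1 - q ^ n) + c (m + 1, n + 1) * (1 - q ^ (n + 1)) = 0 := by
    intro m n
    have h := key (m + 1, n)
    rw [sum_helper1 c _ _ _ (m, n) (by
      intro p hp _
      have h1 : p.1 + 1 = m + 1 := congrArg Prod.fst hp
      have h2 : p.2 = n := congrArg Prod.snd hp
      have h3 : p.1 = m := by omega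
      rw [← h3, ← h2]) (by simp)] at h
    rw [sum_helper1 c _ _ _ (m + 1, n + 1) (by
      intro p hp hα
      have h1 : p.1 = m + 1 := congrArg Prod.fst hp
      have h2 : p.2 - 1 = n := congrArg Prod.snd hp
      have h3 : p.2 ≠ 0 := by
        intro h4
        apply hα
        rw [h4, pow_zero, sub_self]
      have : p.2 = n + 1 := by omega
      rw [← h1, ← this]) (by simp)] at h
    exact h
  intro m
  induction m with
  | zero =>
    intro n
    cases n with
    | zero => rw [pow_zero, sub_self, mul_zero]
    | succ n => exact E0 n
  | succ m ih =>
    intro n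
    cases n with
    | zero => rw [pow_zero, sub_self, mul_zero]
    | succ n =>
      have h := E1 m n
      rw [ih n, zero_add] at h
      exact h

/-- commutation with `∂` forces coefficients with `q^m ≠ 1` to vanish -/
theorem qCoeffD (hq0 : q ≠ 0) (z : qWeyl K q) (hz : qD K q * z = z * qD K q) :
    ∀ m n : ℕ, ((qBasis (q := q) hq0).repr z) (m, n) * (q ^ m - 1) = 0 := by
  classical
  have hinner : ∀ p : ℕ × ℕ, qD K q * qbb K q p - qbb K q p * qD K q
      = (q ^ p.1 - 1) • (qbb K q (p.1, p.2 + 1) + qbb K q (p.1 - 1, p.2)) := by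
    intro p
    rw [qD_mul_bb, qbb_mul_D]
    module
  set c := (qBasis (q := q) hq0).repr z with hc
  have key := qCoeff hq0 z (fun p => q ^ p.1 - 1)
    (fun p => (p.1, p.2 + 1)) (fun p => (p.1 - 1, p.2)) (qD K q) hz hinner
  have E0 : ∀ m : ℕ, c (m + 1, 0) * (q ^ (m + 1) - 1) = 0 := by
    intro m
    have h := key (m, 0)
    rw [sum_helper0 c _ _ _ (by
      intro p hp
      exfalso
      exact Nat.succ_ne_zero p.2 (congrArg Prod.snd hp))] at h
    rw [sum_helper1 c _ _ _ (m + 1, 0) (by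
      intro p hp hα
      have h1 : p.1 - 1 = m := congrArg Prod.fst hp
      have h2 : p.2 = 0 := congrArg Prod.snd hp
      have h3 : p.1 ≠ 0 := by
        intro h4
        apply hα
        rw [h4, pow_zero, sub_self]
      have : p.1 = m + 1 := by omega
      rw [← this, ← h2]) (by simp)] at h
    rw [zero_add] at h
    exact h
  have E1 : ∀ m n : ℕ, c (m, n) * (q ^ m - 1) + c (m + 1, n + 1) * (q ^ (m + 1) - 1) = 0 := by
    intro m n
    have h := key (m, n + 1)
    rw [sum_helper1 c _ _ _ (m, n) (by
      intro p hp _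
      have h1 : p.1 = m := congrArg Prod.fst hp
      have h2 : p.2 + 1 = n + 1 := congrArg Prod.snd hp
      have h3 : p.2 = n := by omega
      rw [← h1, ← h3]) (by simp)] at h
    rw [sum_helper1 c _ _ _ (m + 1, n + 1) (by
      intro p hp hα
      have h1 : p.1 - 1 = m := congrArg Prod.fst hp
      have h2 : p.2 = n + 1 := congrArg Prod.snd hp
      have h3 : p.1 ≠ 0 := by
        intro h4
        apply hα
        rw [h4, pow_zero, sub_self]
      have : p.1 = m + 1 := by omega
      rw [← this, ← h2]) (by simp)] at h
    exact h
  intro m n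
  induction n generalizing m with
  | zero =>
    cases m with
    | zero => rw [pow_zero, sub_self, mul_zero]
    | succ m => exact E0 m
  | succ n ih =>
    cases m with
    | zero => rw [pow_zero, sub_self, mul_zero]
    | succ m =>
      have h := E1 m n
      rw [ih m, zero_add] at h
      exact h

theorem qMemCenter (a : qWeyl K q) (hx : qX K q * a = a * qX K q)
    (hd : qD K q * a = a * qD K q) : a ∈ Subalgebra.center K (qWeyl K q) := by
  rw [Subalgebra.mem_center_iff]
  intro b
  have hb : b ∈ Algebra.adjoin K {qX K q, qD K q} := by rw [qGen]; trivial
  induction hb using Algebra.adjoin_induction with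
  | mem x h =>
    rcases h with h | h
    · subst h; exact hx
    · rw [Set.mem_singleton_iff] at h; subst h; exact hd
  | algebraMap r => exact Algebra.commutes r a
  | add x y _ _ h1 h2 => rw [add_mul, mul_add, h1, h2]
  | mul x y _ _ h1 h2 => rw [mul_assoc, h2, ← mul_assoc, h1, mul_assoc]

end Aux


set_option maxHeartbeats 1000000 in
/-- For `q` a primitive `l`-th root of unity (`l > 1` odd) in an algebraically closed field of
characteristic zero, the center of the `q`-Weyl algebra is the subalgebra generated by
`xˡ` and `∂ˡ`. -/
theorem stmt6 (K : Type) [Field K] [IsAlgClosed K] [CharZero K]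
    (l : ℕ) (hl : 1 < l) (hodd : Odd l) (q : K) (hq : IsPrimitiveRoot q l) :
    Subalgebra.center K (qWeyl K q) =
      Algebra.adjoin K {(qX K q) ^ l, (qD K q) ^ l} := by
  have hl0 : l ≠ 0 := by omega
  have hq0 : q ≠ 0 := hq.ne_zero hl0
  have hql : q ^ l = 1 := hq.pow_eq_one
  apply le_antisymm
  · -- center ⊆ adjoin
    intro z hz
    rw [Subalgebra.mem_center_iff] at hz
    have hzx : qX K q * z = z * qX K q := hz (qX K q)
    have hzd : qD K q * z = z * qD K q := hz (qD K q)
    have G1 := qCoeffX hq0 z hzx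
    have G2 := qCoeffD hq0 z hzd
    rw [qBasis_repr_sum hq0 z, Finsupp.sum]
    apply Subalgebra.sum_mem
    intro p hp
    apply Subalgebra.smul_mem
    have hcp : ((qBasis (q := q) hq0).repr z) p ≠ 0 := Finsupp.mem_support_iff.mp hp
    have hd1 : l ∣ p.1 := by
      by_contra hnd
      have hne : q ^ p.1 ≠ 1 := fun h => hnd ((hq.pow_eq_one_iff_dvd p.1).mp h)
      have h := G2 p.1 p.2
      rw [Prod.mk.eta] at h
      rcases mul_eq_zero.mp h with h' | h'
      · exact hcp h'
      · exact hne (sub_eq_zero.mp h')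
    have hd2 : l ∣ p.2 := by
      by_contra hnd
      have hne : q ^ p.2 ≠ 1 := fun h => hnd ((hq.pow_eq_one_iff_dvd p.2).mp h)
      have h := G1 p.1 p.2
      rw [Prod.mk.eta] at h
      rcases mul_eq_zero.mp h with h' | h'
      · exact hcp h'
      · exact hne (sub_eq_zero.mp h').symm
    obtain ⟨a, ha⟩ := hd1
    obtain ⟨b, hb⟩ := hd2
    show qbb K q p ∈ _
    rw [qbb, ha, hb, pow_mul, pow_mul]
    apply Subalgebra.mul_mem
    · apply Subalgebra.pow_mem
      apply Algebra.subset_adjoin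
      exact Set.mem_insert _ _
    · apply Subalgebra.pow_mem
      apply Algebra.subset_adjoin
      exact Set.mem_insert_of_mem _ rfl
  · apply Algebra.adjoin_le
    rintro v hv
    rcases Set.mem_insert_iff.mp hv with rfl | hv
    · apply qMemCenter
      · exact ((Commute.refl (qX K q)).pow_right l).eq
      · rw [qDXpow l, hql]
        simp
    · rw [Set.mem_singleton_iff] at hv
      subst hv
      apply qMemCenter
      · have h := qDpowX (K := K) (q := q) l
        rw [hql] at h
        simp only [one_smul, sub_self, zero_smul, add_zero] at h
        exact h.symm
      · exact ((Commute.refl (qD K q)).pow_right l).eq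
end

section
/- Let K be an algebraically closed field, l > 1, q ∈ K a primitive l-th root of unity, and ζ = (a, ω) ∈ K². Let D_{q,ζ} be the algebra K⟨x,∂⟩/(∂x - q x ∂ - (q-1), xˡ - a, ∂ˡ - ω). If 1 + aω ≠ 0 and a ≠ 0, then D_{q,ζ} is isomorphic to the matrix algebra M_l(K). -/
/-- The defining relations of the fiber `D_{q,ζ}` of the `q`-Weyl algebra over the point
`ζ = (a, ω)` of the spectrum of its `l`-center: `∂x = q x∂ + (q-1)`, `xˡ = a`, `∂ˡ = ω`. -/
inductive qWeylFiberRel (K : Type) [CommRing K] (q a ω : K) (l : ℕ) :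
    FreeAlgebra K (Fin 2) → FreeAlgebra K (Fin 2) → Prop
  | weyl : qWeylFiberRel K q a ω l (FreeAlgebra.ι K 1 * FreeAlgebra.ι K 0)
      (q • (FreeAlgebra.ι K 0 * FreeAlgebra.ι K 1) + (q - 1) • (1 : FreeAlgebra K (Fin 2)))
  | xl : qWeylFiberRel K q a ω l ((FreeAlgebra.ι K (0 : Fin 2)) ^ l)
      (algebraMap K (FreeAlgebra K (Fin 2)) a)
  | dl : qWeylFiberRel K q a ω l ((FreeAlgebra.ι K (1 : Fin 2)) ^ l)
      (algebraMap K (FreeAlgebra K (Fin 2)) ω)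

/-- The fiber algebra `D_{q,ζ} = K⟨x,∂⟩/(∂x - q x ∂ - (q-1), xˡ - a, ∂ˡ - ω)`. -/
abbrev qWeylFiber (K : Type) [CommRing K] (q a ω : K) (l : ℕ) : Type :=
  RingQuot (qWeylFiberRel K q a ω l)

namespace Stmt9Aux

open Fin.NatCast Fin.CommRing

variable {K : Type} [Field K] {l : ℕ} [NeZero l]

/-- The matrix representing `x`: `α` times the cyclic shift. -/
def Xm (l : ℕ) [NeZero l] (α : K) : Matrix (Fin l) (Fin l) K :=
  Matrix.of fun i j => if i = j + 1 then α else 0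

/-- The matrix representing `∂`. -/
def Dm (l : ℕ) [NeZero l] (β : Fin l → K) : Matrix (Fin l) (Fin l) K :=
  Matrix.of fun i j => if j = i + 1 then β j else 0

theorem Xm_pow (α : K) (m : ℕ) :
    (Xm l α) ^ m = Matrix.of fun i j => if i = j + (m : Fin l) then α ^ m else 0 := by
  induction m with
  | zero =>
    ext i j
    simp [Matrix.one_apply, eq_comm]
  | succ m ih =>
    rw [pow_succ', ih]
    ext i j
    rw [Matrix.mul_apply]
    rw [Finset.sum_eq_single (i - 1)]
    · simp only [Xm, Matrix.of_apply]
      rw [if_pos (by group), pow_succ']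
      push_cast
      by_cases h : i = j + ((m : Fin l) + 1)
      · rw [if_pos h, if_pos (by rw [h]; group), mul_comm]
      · rw [if_neg h, if_neg (by intro hc; apply h; rw [← add_assoc, ← hc, sub_add_cancel]),
          mul_zero]
    · intro b _ hb
      simp only [Xm, Matrix.of_apply]
      rw [if_neg (by intro hc; apply hb; rw [hc]; group), zero_mul]
    · simp

theorem Dm_pow (β : Fin l → K) (m : ℕ) :
    (Dm l β) ^ m = Matrix.of fun i j =>
      if j = i + (m : Fin l) then ∏ t ∈ Finset.range m, β (i + (t : Fin l) + 1) else 0 := by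
  induction m with
  | zero =>
    ext i j
    simp [Matrix.one_apply, eq_comm]
  | succ m ih =>
    rw [pow_succ', ih]
    ext i j
    rw [Matrix.mul_apply]
    rw [Finset.sum_eq_single (i + 1)]
    · simp only [Dm, Matrix.of_apply]
      simp only [if_true]
      push_cast
      by_cases h : j = i + ((m : Fin l) + 1)
      · rw [if_pos h, if_pos (by rw [h]; group)]
        rw [Finset.prod_range_succ']
        push_cast
        rw [mul_comm]
        congr 1
        · apply Finset.prod_congr rfl
          intro t _
          congr 1
          group
        · congr 1
          group
      · rw [if_neg h, if_neg (by intro hc; apply h; rw [hc]; group), mul_zero]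
    · intro b _ hb
      simp only [Dm, Matrix.of_apply]
      rw [if_neg (fun hc => hb hc), zero_mul]
    · simp

theorem Dm_mul_Xm (α : K) (β : Fin l → K) :
    Dm l β * Xm l α = Matrix.diagonal (fun i => α * β (i + 1)) := by
  ext i j
  rw [Matrix.mul_apply, Finset.sum_eq_single (i + 1)]
  · simp only [Dm, Xm, Matrix.of_apply, if_true, Matrix.diagonal_apply]
    by_cases h : i = j
    · rw [if_pos (by rw [h]), if_pos h, mul_comm]
    · rw [if_neg (by intro hc; exact h (add_right_cancel hc)), if_neg h, mul_zero]
  · intro b _ hb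
    simp only [Dm, Matrix.of_apply]
    rw [if_neg (fun hc => hb hc), zero_mul]
  · simp

theorem Xm_mul_Dm (α : K) (β : Fin l → K) :
    Xm l α * Dm l β = Matrix.diagonal (fun i => α * β i) := by
  ext i j
  rw [Matrix.mul_apply, Finset.sum_eq_single (i - 1)]
  · simp only [Dm, Xm, Matrix.of_apply, Matrix.diagonal_apply]
    rw [if_pos (by group), sub_add_cancel]
    by_cases h : i = j
    · rw [if_pos h.symm, if_pos h, h]
    · rw [if_neg (fun hc => h hc.symm), if_neg h, mul_zero]
  · intro b _ hb
    simp only [Xm, Matrix.of_apply]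
    rw [if_neg (by intro hc; apply hb; rw [hc]; group), zero_mul]
  · simp

theorem adjoin_eq_top (α : K) (β : Fin l → K) (hα : α ≠ 0)
    (hd : Function.Injective fun i : Fin l => α * β i) :
    Algebra.adjoin K {Xm l α, Dm l β} = ⊤ := by
  set d : Fin l → K := fun i => α * β i with hd_def
  set S := Algebra.adjoin K {Xm l α, Dm l β} with hS
  have hX : Xm l α ∈ S := Algebra.subset_adjoin (by simp)
  have hD : Dm l β ∈ S := Algebra.subset_adjoin (by simp)
  have hdiag : Matrix.diagonal d ∈ S := by
    rw [← Xm_mul_Dm]; exact mul_mem hX hD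
  have haeval : ∀ p : Polynomial K, Polynomial.aeval (Matrix.diagonal d) p =
      Matrix.diagonal (fun j => Polynomial.eval (d j) p) := by
    intro p
    have h2 : (Polynomial.aeval d p : Fin l → K) = fun j => Polynomial.eval (d j) p := by
      funext j
      rw [← Polynomial.coe_aeval_eq_eval]
      exact (Polynomial.aeval_algHom_apply (Pi.evalAlgHom K (fun _ : Fin l => K) j) d p).symm
    have h1 : Matrix.diagonal d =
        (Matrix.diagonalAlgHom K : (Fin l → K) →ₐ[K] Matrix (Fin l) (Fin l) K) d := rfl
    rw [h1, Polynomial.aeval_algHom_apply]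
    show Matrix.diagonal (Polynomial.aeval d p) = _
    rw [h2]
  have hEii : ∀ i : Fin l, Matrix.single i i (1 : K) ∈ S := by
    intro i
    have hinj : Set.InjOn d (Finset.univ : Finset (Fin l)) := fun u _ v _ h => hd h
    set p := Lagrange.basis Finset.univ d i with hp
    have hval : Polynomial.aeval (Matrix.diagonal d) p = Matrix.single i i (1 : K) := by
      rw [haeval]
      ext r s
      simp only [Matrix.diagonal_apply, Matrix.single, Matrix.of_apply]
      by_cases hrs : r = s
      · subst hrs
        by_cases hri : i = r
        · subst hri
          rw [if_pos rfl, if_pos ⟨rfl, rfl⟩, hp,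
            Lagrange.eval_basis_self hinj (Finset.mem_univ i)]
        · rw [if_pos rfl, if_neg (by tauto), hp,
            Lagrange.eval_basis_of_ne hri (Finset.mem_univ r)]
      · rw [if_neg hrs, if_neg (by rintro ⟨rfl, rfl⟩; exact hrs rfl)]
    rw [← hval]
    exact Algebra.adjoin_le (Set.singleton_subset_iff.mpr hdiag)
      (Polynomial.aeval_mem_adjoin_singleton K _)
  have hsub : ∀ j : Fin l, Matrix.single (j + 1) j (1 : K) ∈ S := by
    intro j
    have hXE : Xm l α * Matrix.single j j (1 : K) =
        Matrix.single (j + 1) j α := by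
      ext r s
      rw [Matrix.mul_apply, Finset.sum_eq_single j]
      · simp only [Xm, Matrix.of_apply, Matrix.single]
        by_cases h1 : j = s <;> by_cases h2 : r = j + 1 <;>
          simp [h1, h2, eq_comm]
      · intro b _ hb
        simp only [Matrix.single, Matrix.of_apply]
        rw [if_neg (by tauto), mul_zero]
      · simp
    have : Matrix.single (j + 1) j (1 : K) =
        α⁻¹ • (Xm l α * Matrix.single j j 1) := by
      rw [hXE, Matrix.smul_single, smul_eq_mul, inv_mul_cancel₀ hα]
    rw [this]
    exact Subalgebra.smul_mem S (mul_mem hX (hEii j)) _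
  have hchain : ∀ m : ℕ, ∀ j : Fin l, Matrix.single (j + (m : Fin l)) j (1 : K) ∈ S := by
    intro m
    induction m with
    | zero => intro j; simpa using hEii j
    | succ m ih =>
      intro j
      have key : Matrix.single (j + ((m : Fin l) + 1)) j (1 : K) =
          Matrix.single ((j + (m : Fin l)) + 1) (j + (m : Fin l)) (1 : K) *
            Matrix.single (j + (m : Fin l)) j (1 : K) := by
        rw [Matrix.single_mul_single_same, one_mul, add_assoc]
      push_cast
      rw [key]
      exact mul_mem (hsub _) (ih j)
  have hall : ∀ i j : Fin l, Matrix.single i j (1 : K) ∈ S := by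
    intro i j
    have := hchain (i - j).val j
    rwa [Fin.cast_val_eq_self, add_sub_cancel] at this
  rw [eq_top_iff]
  intro M _
  rw [Matrix.matrix_eq_sum_single M]
  refine Subalgebra.sum_mem S fun i _ => Subalgebra.sum_mem S fun j _ => ?_
  have heq : Matrix.single i j (M i j) = M i j • Matrix.single i j (1 : K) := by
    rw [Matrix.smul_single, smul_eq_mul, mul_one]
  rw [heq]
  exact Subalgebra.smul_mem S (hall i j) _

theorem prod_sub_pow_mul {q : K} (hq : IsPrimitiveRoot q l) (hl : 0 < l) (α Y : K) :
    ∏ k ∈ Finset.range l, (Y - q ^ k * α) = Y ^ l - α ^ l := by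
  have h1 : Polynomial.nthRoots l (α ^ l) = (Multiset.range l).map (fun k => q ^ k * α) :=
    hq.nthRoots_eq rfl
  have hm : (Polynomial.X ^ l - Polynomial.C (α ^ l)).Monic :=
    Polynomial.monic_X_pow_sub_C _ hl.ne'
  have hroots : (Polynomial.X ^ l - Polynomial.C (α ^ l)).roots =
      (Multiset.range l).map (fun k => q ^ k * α) := h1
  have h2 := Polynomial.prod_multiset_X_sub_C_of_monic_of_roots_card_eq hm
    (by rw [hroots, Multiset.card_map, Multiset.card_range,
      Polynomial.natDegree_X_pow_sub_C])
  have h3 := congrArg (Polynomial.eval Y) h2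
  rw [hroots] at h3
  simp only [Polynomial.eval_sub, Polynomial.eval_pow, Polynomial.eval_X, Polynomial.eval_C,
    Polynomial.eval_multiset_prod, Multiset.map_map] at h3
  rw [← h3, Finset.prod_eq_multiset_prod, Finset.range_val]
  exact congrArg Multiset.prod
    (Multiset.map_congr rfl (fun k _ => by simp [Function.comp]))

end Stmt9Aux

open Stmt9Aux Fin.NatCast Fin.CommRing in
/-- For `q` a primitive `l`-th root of unity (`l > 1` odd, char 0, `K` algebraically closed),
if `a ≠ 0` and `1 + aω ≠ 0`, then the fiber algebra `D_{q,(a,ω)}` is isomorphic to the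
matrix algebra `M_l(K)`. -/
theorem stmt9 (K : Type) [Field K] [IsAlgClosed K] [CharZero K]
    (l : ℕ) (hl : 1 < l) (hodd : Odd l) (q : K) (hq : IsPrimitiveRoot q l)
    (a ω : K) (ha : a ≠ 0) (haω : 1 + a * ω ≠ 0) :
    Nonempty (qWeylFiber K q a ω l ≃ₐ[K] Matrix (Fin l) (Fin l) K) := by
  haveI : NeZero l := ⟨by omega⟩
  have hl0 : 0 < l := by omega
  -- choose `α` and `c`
  obtain ⟨α, hα⟩ := IsAlgClosed.exists_pow_nat_eq a hl0
  have hα0 : α ≠ 0 := by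
    intro h; apply ha; rw [← hα, h, zero_pow hl0.ne']
  obtain ⟨c, hc⟩ := IsAlgClosed.exists_pow_nat_eq (ω + (α ^ l)⁻¹) hl0
  have hc0 : c ≠ 0 := by
    intro h
    rw [h, zero_pow hl0.ne'] at hc
    have : a * (ω + (α ^ l)⁻¹) = 0 := by rw [← hc, mul_zero]
    rw [mul_add, hα, mul_inv_cancel₀ ha] at this
    exact haω (by linear_combination this)
  have hpow : ∀ m : ℕ, q ^ ((m : Fin l) : ℕ) = q ^ m := by
    intro m
    rw [Fin.val_natCast]
    conv_rhs => rw [← Nat.div_add_mod m l]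
    rw [pow_add, pow_mul, hq.pow_eq_one, one_pow, one_mul]
  set β : Fin l → K := fun i => q ^ (i : ℕ) * c - α⁻¹ with hβ
  have hβsucc : ∀ i : Fin l, α * β (i + 1) = q * (α * β i) + (q - 1) := by
    intro i
    have h1 : (i + 1 : Fin l) = (((i : ℕ) + 1 : ℕ) : Fin l) := by
      push_cast [Fin.cast_val_eq_self]
      rfl
    rw [hβ]
    simp only []
    rw [h1, hpow, pow_succ]
    field_simp
    ring
  -- the matrix relations
  have R1 : Dm l β * Xm l α = q • (Xm l α * Dm l β) +
      (q - 1) • (1 : Matrix (Fin l) (Fin l) K) := by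
    rw [Dm_mul_Xm, Xm_mul_Dm]
    ext i j
    by_cases h : i = j
    · subst h
      simp only [Matrix.diagonal_apply_eq, Matrix.add_apply, Matrix.smul_apply,
        Matrix.one_apply_eq, smul_eq_mul, mul_one]
      exact hβsucc i
    · simp [Matrix.diagonal_apply_ne _ h, Matrix.one_apply_ne h]
  have R2 : (Xm l α) ^ l = algebraMap K (Matrix (Fin l) (Fin l) K) a := by
    rw [Xm_pow]
    ext i j
    simp only [Matrix.of_apply, Fin.natCast_self, add_zero, Matrix.algebraMap_matrix_apply]
    by_cases h : i = j <;> simp [h, hα, Algebra.algebraMap_self_apply]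
  have R3 : (Dm l β) ^ l = algebraMap K (Matrix (Fin l) (Fin l) K) ω := by
    rw [Dm_pow]
    have hprod : ∀ i : Fin l, ∏ t ∈ Finset.range l, β (i + (t : Fin l) + 1) = ω := by
      intro i
      have e1 : ∏ t ∈ Finset.range l, β (i + (t : Fin l) + 1) =
          ∏ t : Fin l, β (i + t + 1) := by
        rw [← Fin.prod_univ_eq_prod_range (fun t : ℕ => β (i + (t : Fin l) + 1)) l]
        exact Finset.prod_congr rfl fun t _ => by rw [Fin.cast_val_eq_self]
      have e2 : ∏ t : Fin l, β (i + t + 1) = ∏ t : Fin l, β t := by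
        rw [← Equiv.prod_comp (Equiv.addLeft (i + 1)) β]
        exact Finset.prod_congr rfl fun t _ => by
          congr 1
          show i + t + 1 = (i + 1) + t
          ring
      have e3 : (∏ t : Fin l, β t) = ∏ m ∈ Finset.range l, (q ^ m * c - α⁻¹) :=
        Fin.prod_univ_eq_prod_range (fun m : ℕ => q ^ m * c - α⁻¹) l
      have e4 : ∏ m ∈ Finset.range l, (q ^ m * c - α⁻¹) = ω := by
        have step1 : ∀ m ∈ Finset.range l, q ^ m * c - α⁻¹ = (-1) * (α⁻¹ - q ^ m * c) := by
          intro m _; ring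
        rw [Finset.prod_congr rfl step1, Finset.prod_mul_distrib, Finset.prod_const,
          Finset.card_range, hodd.neg_one_pow, prod_sub_pow_mul hq hl0 c α⁻¹, hc,
          inv_pow, hα]
        ring
      rw [e1, e2, e3, e4]
    ext i j
    simp only [Matrix.of_apply, Fin.natCast_self, add_zero, Matrix.algebraMap_matrix_apply]
    by_cases h : i = j
    · subst h
      rw [if_pos rfl, if_pos rfl, hprod i, Algebra.algebraMap_self_apply]
    · rw [if_neg (fun hc' => h hc'.symm), if_neg h]
  -- the representation on `K^l`
  set f : Fin 2 → Matrix (Fin l) (Fin l) K := ![Xm l α, Dm l β] with hf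
  set F : FreeAlgebra K (Fin 2) →ₐ[K] Matrix (Fin l) (Fin l) K := FreeAlgebra.lift K f with hF
  have hF0 : F (FreeAlgebra.ι K 0) = Xm l α := by simp [hF, hf]
  have hF1 : F (FreeAlgebra.ι K 1) = Dm l β := by simp [hF, hf]
  have hrel : ∀ ⦃u v : FreeAlgebra K (Fin 2)⦄, qWeylFiberRel K q a ω l u v → F u = F v := by
    intro u v h
    cases h with
    | weyl =>
      rw [map_mul, map_add, map_smul, map_smul, map_one, map_mul, hF0, hF1]
      exact R1
    | xl => rw [map_pow, hF0, AlgHom.commutes]; exact R2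
    | dl => rw [map_pow, hF1, AlgHom.commutes]; exact R3
  set φ : qWeylFiber K q a ω l →ₐ[K] Matrix (Fin l) (Fin l) K :=
    RingQuot.liftAlgHom K ⟨F, hrel⟩ with hφ
  set mkQ : FreeAlgebra K (Fin 2) →ₐ[K] qWeylFiber K q a ω l :=
    RingQuot.mkAlgHom K (qWeylFiberRel K q a ω l) with hmkQ
  have hφmk : ∀ w, φ (mkQ w) = F w := fun w => by
    rw [hφ, hmkQ, RingQuot.liftAlgHom_mkAlgHom_apply]
  set x : qWeylFiber K q a ω l := mkQ (FreeAlgebra.ι K 0) with hx_def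
  set d : qWeylFiber K q a ω l := mkQ (FreeAlgebra.ι K 1) with hd_def
  -- surjectivity of φ
  have hdinj : Function.Injective fun i : Fin l => α * β i := by
    intro i j hij
    simp only [hβ] at hij
    have h1 : q ^ (i : ℕ) * c - α⁻¹ = q ^ (j : ℕ) * c - α⁻¹ := mul_left_cancel₀ hα0 hij
    have h2 : q ^ (i : ℕ) * c = q ^ (j : ℕ) * c := by linear_combination h1
    exact Fin.ext (hq.pow_inj i.2 j.2 (mul_right_cancel₀ hc0 h2))
  have hsurj : Function.Surjective φ := by
    rw [← AlgHom.range_eq_top]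
    apply top_unique
    rw [← adjoin_eq_top α β hα0 hdinj]
    apply Algebra.adjoin_le
    rintro M (rfl | rfl)
    · exact ⟨x, by rw [hx_def]; exact (hφmk _).trans hF0⟩
    · exact ⟨d, by rw [hd_def]; exact (hφmk _).trans hF1⟩
  -- the relations in the quotient
  have hw : d * x = q • (x * d) + (q - 1) • (1 : qWeylFiber K q a ω l) := by
    have h := RingQuot.mkAlgHom_rel K
      (qWeylFiberRel.weyl (K := K) (q := q) (a := a) (ω := ω) (l := l))
    rw [map_mul, map_add, map_smul, map_smul, map_one, map_mul] at h
    exact h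
  have hxl : x ^ l = algebraMap K (qWeylFiber K q a ω l) a := by
    have h := RingQuot.mkAlgHom_rel K
      (qWeylFiberRel.xl (K := K) (q := q) (a := a) (ω := ω) (l := l))
    rw [map_pow, AlgHom.commutes] at h
    exact h
  have hdl : d ^ l = algebraMap K (qWeylFiber K q a ω l) ω := by
    have h := RingQuot.mkAlgHom_rel K
      (qWeylFiberRel.dl (K := K) (q := q) (a := a) (ω := ω) (l := l))
    rw [map_pow, AlgHom.commutes] at h
    exact h
  -- the derived commutation rule
  have dxi : ∀ n : ℕ, d * x ^ n = q ^ n • (x ^ n * d) + (q ^ n - 1) • x ^ (n - 1) := by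
    intro n
    induction n with
    | zero => simp
    | succ n ih =>
      rcases Nat.eq_zero_or_pos n with rfl | hn
      · simpa using hw
      · have e5 : x * x ^ (n - 1) = x ^ n := by
          rw [← pow_succ', Nat.sub_add_cancel hn]
        calc d * x ^ (n + 1) = (d * x) * x ^ n := by rw [pow_succ', ← mul_assoc]
          _ = (q • (x * d) + (q - 1) • 1) * x ^ n := by rw [hw]
          _ = q • (x * (d * x ^ n)) + (q - 1) • x ^ n := by
              rw [add_mul, smul_mul_assoc, smul_mul_assoc, one_mul, mul_assoc]
          _ = q • (x * (q ^ n • (x ^ n * d) + (q ^ n - 1) • x ^ (n - 1))) + (q - 1) • x ^ n := by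
              rw [ih]
          _ = (q * q ^ n) • (x * (x ^ n * d)) + (q * (q ^ n - 1)) • (x * x ^ (n - 1)) +
              (q - 1) • x ^ n := by
              rw [mul_add, mul_smul_comm, mul_smul_comm, smul_add, smul_smul, smul_smul]
          _ = q ^ (n + 1) • (x ^ (n + 1) * d) + (q ^ (n + 1) - 1) • x ^ ((n + 1) - 1) := by
              rw [← mul_assoc x, ← pow_succ', ← pow_succ', e5, Nat.add_sub_cancel, add_assoc,
                ← add_smul, show q * (q ^ n - 1) + (q - 1) = q ^ (n + 1) - 1 by ring]
  -- the spanning submodule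
  set g : Fin l × Fin l → qWeylFiber K q a ω l :=
      fun p => x ^ ((p.1 : ℕ)) * d ^ ((p.2 : ℕ)) with hg
  set V : Submodule K (qWeylFiber K q a ω l) := Submodule.span K (Set.range g) with hV_def
  have hmemV : ∀ (i j : ℕ), i < l → j < l → x ^ i * d ^ j ∈ V := by
    intro i j hi hj
    exact Submodule.subset_span ⟨(⟨i, hi⟩, ⟨j, hj⟩), rfl⟩
  have hxV : ∀ v ∈ V, x * v ∈ V := by
    intro v hv
    induction hv using Submodule.span_induction with
    | mem v hv =>
      obtain ⟨⟨i, j⟩, rfl⟩ := hv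
      simp only [hg]
      rw [← mul_assoc, ← pow_succ']
      by_cases h : (i : ℕ) + 1 < l
      · exact hmemV _ _ h j.2
      · have h' : (i : ℕ) + 1 = l := le_antisymm (Nat.succ_le_of_lt i.2) (not_lt.mp h)
        rw [h', hxl, ← Algebra.smul_def]
        exact V.smul_mem _ (by simpa using hmemV 0 j hl0 j.2)
    | zero => rw [mul_zero]; exact V.zero_mem
    | add u w hu hw ihu ihw => rw [mul_add]; exact V.add_mem ihu ihw
    | smul r u hu ihu => rw [mul_smul_comm]; exact V.smul_mem r ihu
  have hdV : ∀ v ∈ V, d * v ∈ V := by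
    intro v hv
    induction hv using Submodule.span_induction with
    | mem v hv =>
      obtain ⟨⟨i, j⟩, rfl⟩ := hv
      simp only [hg]
      rw [← mul_assoc, dxi (i : ℕ), add_mul, smul_mul_assoc, smul_mul_assoc,
        mul_assoc, ← pow_succ']
      refine V.add_mem (V.smul_mem _ ?_) (V.smul_mem _ ?_)
      · by_cases h : (j : ℕ) + 1 < l
        · exact hmemV _ _ i.2 h
        · have h' : (j : ℕ) + 1 = l := le_antisymm (Nat.succ_le_of_lt j.2) (not_lt.mp h)
          rw [h', hdl, ← Algebra.commutes, ← Algebra.smul_def]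
          exact V.smul_mem _ (by simpa using hmemV (i : ℕ) 0 i.2 hl0)
      · exact hmemV _ _ (lt_of_le_of_lt (Nat.sub_le _ _) i.2) j.2
    | zero => rw [mul_zero]; exact V.zero_mem
    | add u w hu hw ihu ihw => rw [mul_add]; exact V.add_mem ihu ihw
    | smul r u hu ihu => rw [mul_smul_comm]; exact V.smul_mem r ihu
  have honeV : (1 : qWeylFiber K q a ω l) ∈ V := by simpa using hmemV 0 0 hl0 hl0
  have hmulV : ∀ w : FreeAlgebra K (Fin 2), ∀ v ∈ V, mkQ w * v ∈ V := by
    intro w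
    induction w using FreeAlgebra.induction with
    | grade0 r =>
      intro v hv
      rw [AlgHom.commutes, ← Algebra.smul_def]
      exact V.smul_mem r hv
    | grade1 i =>
      fin_cases i
      · exact hxV
      · exact hdV
    | mul w₁ w₂ ih₁ ih₂ =>
      intro v hv
      rw [map_mul, mul_assoc]
      exact ih₁ _ (ih₂ v hv)
    | add w₁ w₂ ih₁ ih₂ =>
      intro v hv
      rw [map_add, add_mul]
      exact V.add_mem (ih₁ v hv) (ih₂ v hv)
  have hVtop : V = ⊤ := by
    rw [eq_top_iff]
    intro u _
    obtain ⟨w, rfl⟩ := RingQuot.mkAlgHom_surjective K (qWeylFiberRel K q a ω l) u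
    simpa using hmulV w 1 honeV
  haveI hfin : Module.Finite K (qWeylFiber K q a ω l) :=
    ⟨Submodule.fg_def.mpr ⟨Set.range g, Set.finite_range g, by rw [← hV_def]; exact hVtop⟩⟩
  have hrank1 : Module.finrank K (qWeylFiber K q a ω l) ≤ l * l := by
    have hL : LinearMap.range (Fintype.linearCombination K g) = V := by
      rw [Fintype.range_linearCombination, hV_def]
    have hle := LinearMap.finrank_range_le (Fintype.linearCombination K g)
    rw [hL, hVtop, finrank_top] at hle
    simpa [Module.finrank_fintype_fun_eq_card] using hle
  have hinj : Function.Injective φ := by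
    have h1 : LinearMap.range φ.toLinearMap = ⊤ := LinearMap.range_eq_top.mpr hsurj
    have h2 := LinearMap.finrank_range_add_finrank_ker φ.toLinearMap
    rw [h1, finrank_top, Module.finrank_matrix, Module.finrank_self] at h2
    simp only [Fintype.card_fin, mul_one] at h2
    have hker : Module.finrank K (LinearMap.ker φ.toLinearMap) = 0 := by omega
    have hbot : LinearMap.ker φ.toLinearMap = ⊥ := Submodule.finrank_eq_zero.mp hker
    have := LinearMap.ker_eq_bot.mp hbot
    exact this
  exact ⟨AlgEquiv.ofBijective φ ⟨hinj, hsurj⟩⟩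
end

section
/- Let V be a finite-dimensional vector space over a field k and J ⊆ End_k(V) a left ideal. Then J = J_U where U = ⋂_{f ∈ J} ker f and J_U = {f : f|_U = 0}. In other words, left ideals of End_k(V) are in bijection with subspaces of V. -/
variable {k V : Type} [Field k] [AddCommGroup V] [Module k V] [FiniteDimensional k V]

/-- An injective linear map from a subspace of `V × V` of small rank into `V`. -/
lemma exists_inj_map (W : Submodule k (V × V)) (h : Module.finrank k W ≤ Module.finrank k V) :
    ∃ e : W →ₗ[k] V, Function.Injective e := by
  obtain ⟨v, hv⟩ := exists_linearIndependent_of_le_finrank (n := Module.finrank k W) h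
  have hfr : Module.finrank k (Submodule.span k (Set.range v)) = Module.finrank k W := by
    rw [finrank_span_eq_card hv]; simp
  obtain ⟨e⟩ := FiniteDimensional.nonempty_linearEquiv_of_finrank_eq hfr.symm
  exact ⟨(Submodule.span k (Set.range v)).subtype.comp (e : W →ₗ[k] _),
    (Submodule.injective_subtype _).comp e.injective⟩

/-- Combine two endomorphisms into one with kernel the intersection. -/
lemma exists_combine (g₁ g₂ : Module.End k V) :
    ∃ h₁ h₂ : Module.End k V,
      LinearMap.ker (h₁ * g₁ + h₂ * g₂) = LinearMap.ker g₁ ⊓ LinearMap.ker g₂ := by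
  set G : V →ₗ[k] V × V := g₁.prod g₂ with hG
  set W := LinearMap.range G with hW
  obtain ⟨e, he⟩ := exists_inj_map W (by
    simpa using (LinearMap.finrank_range_le G))
  obtain ⟨q, hq⟩ := W.exists_isCompl
  set π : (V × V) →ₗ[k] W := W.linearProjOfIsCompl q hq with hπ
  set h : (V × V) →ₗ[k] V := e.comp π with hh
  refine ⟨h.comp (LinearMap.inl k V V), h.comp (LinearMap.inr k V V), ?_⟩
  ext v
  have key : (h.comp (LinearMap.inl k V V) * g₁ + h.comp (LinearMap.inr k V V) * g₂) v
      = h (G v) := by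
    simp [hG, LinearMap.prod_apply, Module.End.mul_apply]
    rw [← map_add]
    congr 1
    simp
  simp only [LinearMap.mem_ker, Submodule.mem_inf, key]
  constructor
  · intro h0
    have hGv : G v ∈ W := LinearMap.mem_range_self G v
    have : π (G v) = ⟨G v, hGv⟩ := Submodule.linearProjOfIsCompl_apply_left hq ⟨G v, hGv⟩
    have h1 : e ⟨G v, hGv⟩ = 0 := by rw [hh] at h0; simpa [this] using h0
    have h2 : (⟨G v, hGv⟩ : W) = 0 := he (by simpa using h1)
    have h3 : G v = 0 := by simpa using congrArg Subtype.val h2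
    constructor
    · simpa using congrArg Prod.fst (show (g₁ v, g₂ v) = (0 : V × V) from h3)
    · simpa using congrArg Prod.snd (show (g₁ v, g₂ v) = (0 : V × V) from h3)
  · rintro ⟨h1, h2⟩
    have : G v = 0 := by simp [hG, LinearMap.prod_apply, h1, h2]
    simp [this]

/-- Factor `f` through `g` when `ker g ≤ ker f`. -/
lemma exists_factor (f g : Module.End k V) (hfg : LinearMap.ker g ≤ LinearMap.ker f) :
    ∃ h : Module.End k V, h * g = f := by
  set φ : LinearMap.range g →ₗ[k] V :=
    ((LinearMap.ker g).liftQ f hfg).comp (g.quotKerEquivRange.symm : _ →ₗ[k] _) with hφ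
  obtain ⟨h, hh⟩ := LinearMap.exists_extend φ
  refine ⟨h, ?_⟩
  ext v
  have h1 : h (g v) = φ ⟨g v, LinearMap.mem_range_self g v⟩ := by
    have := LinearMap.congr_fun hh ⟨g v, LinearMap.mem_range_self g v⟩
    simpa using this
  have h2 : g.quotKerEquivRange (Submodule.Quotient.mk v) = ⟨g v, LinearMap.mem_range_self g v⟩ :=
    Subtype.ext (g.quotKerEquivRange_apply_mk v)
  have h3 : g.quotKerEquivRange.symm ⟨g v, LinearMap.mem_range_self g v⟩
      = Submodule.Quotient.mk v := by rw [LinearEquiv.symm_apply_eq]; exact h2.symm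
  simp only [Module.End.mul_apply, h1, hφ, LinearMap.comp_apply, LinearEquiv.coe_coe, h3]
  simp

/-- Every left ideal `J` of `End_k(V)` (`V` finite dimensional) equals
`J_U = {f : f|_U = 0}` where `U = ⋂_{g ∈ J} ker g`; hence left ideals of `End_k(V)`
are in bijection with subspaces of `V`. -/
theorem stmt12 (k V : Type) [Field k] [AddCommGroup V] [Module k V]
    [FiniteDimensional k V] (J : Ideal (Module.End k V)) :
    ∀ f : Module.End k V,
      f ∈ J ↔ ∀ v ∈ ⨅ g ∈ J, LinearMap.ker (g : Module.End k V), f v = 0 := by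
  -- find g₀ ∈ J with minimal kernel
  set S : Set (Submodule k V) := {N | ∃ g ∈ J, LinearMap.ker g = N} with hS
  have hSne : S.Nonempty := ⟨⊤, 0, J.zero_mem, LinearMap.ker_zero⟩
  obtain ⟨N, ⟨g₀, hg₀J, hg₀⟩, hmin⟩ := (wellFounded_lt (α := Submodule k V)).has_min S hSne
  have hker : ∀ g ∈ J, N ≤ LinearMap.ker g := by
    intro g hg
    obtain ⟨h₁, h₂, hk⟩ := exists_combine (k := k) g₀ g
    have hmem : h₁ * g₀ + h₂ * g ∈ J :=
      J.add_mem (J.mul_mem_left h₁ hg₀J) (J.mul_mem_left h₂ hg)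
    have hle : LinearMap.ker (h₁ * g₀ + h₂ * g) ≤ N := by rw [hk, hg₀]; exact inf_le_left
    have : ¬ LinearMap.ker (h₁ * g₀ + h₂ * g) < N := fun hlt =>
      hmin _ ⟨_, hmem, rfl⟩ hlt
    have heq : LinearMap.ker (h₁ * g₀ + h₂ * g) = N := le_antisymm hle (by
      by_contra hcon
      exact this (lt_of_le_of_ne hle (fun he => hcon (he ▸ le_refl _))))
    calc N = LinearMap.ker (h₁ * g₀ + h₂ * g) := heq.symm
      _ ≤ LinearMap.ker g := by rw [hk]; exact inf_le_right
  have hU : (⨅ g ∈ J, LinearMap.ker (g : Module.End k V)) = N := by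
    apply le_antisymm
    · rw [← hg₀]; exact iInf₂_le g₀ hg₀J
    · exact le_iInf₂ hker
  intro f
  constructor
  · intro hf v hv
    rw [hU, ← hg₀] at hv
    have := hker f hf (hg₀ ▸ hv)
    exact this
  · intro hf
    have hle : LinearMap.ker g₀ ≤ LinearMap.ker f := by
      intro v hv
      exact hf v (by rw [hU, ← hg₀]; exact hv)
    obtain ⟨h, hh⟩ := exists_factor f g₀ hle
    exact hh ▸ J.mul_mem_left h hg₀J
end

section
/- Let V be a finite-dimensional vector space over a field k and W ⊆ V a subspace. The map End_k(W) → End_{End_k(V)}(Hom_k(W,V))^{op} sending f to the map g ↦ g ∘ f is an algebra isomorphism. -/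
/-- For `W ⊆ V` finite dimensional, the map `End_k(W) → End_{End_k(V)}(Hom_k(W,V))^op`,
`f ↦ (g ↦ g ∘ f)`, is an algebra isomorphism; here `Hom_k(W,V)` is a left
`End_k(V)`-module by postcomposition. -/
theorem stmt13 (k V : Type) [Field k] [AddCommGroup V] [Module k V]
    [FiniteDimensional k V] (W : Submodule k V) :
    ∃ e : Module.End k W ≃ₐ[k] (Module.End (Module.End k V) (W →ₗ[k] V))ᵐᵒᵖ,
      ∀ (f : Module.End k W) (g : W →ₗ[k] V), (e f).unop g = g ∘ₗ f := by
  classical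
  let Ψ : Module.End k W → Module.End (Module.End k V) (W →ₗ[k] V) := fun f =>
    { toFun := fun g => g ∘ₗ f
      map_add' := fun g h => LinearMap.add_comp _ _ _
      map_smul' := fun a g => rfl }
  have hΨ : ∀ f g, Ψ f g = g ∘ₗ f := fun _ _ => rfl
  let Φ : Module.End k W →ₐ[k] (Module.End (Module.End k V) (W →ₗ[k] V))ᵐᵒᵖ :=
    { toFun := fun f => MulOpposite.op (Ψ f)
      map_one' := by
        apply MulOpposite.unop_injective
        refine LinearMap.ext fun g => ?_
        ext x; simp [hΨ]
      map_mul' := fun f f' => by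
        apply MulOpposite.unop_injective
        refine LinearMap.ext fun g => ?_
        ext x; simp [hΨ]
      map_zero' := by
        apply MulOpposite.unop_injective
        refine LinearMap.ext fun g => ?_
        simp only [MulOpposite.unop_op, MulOpposite.unop_zero, hΨ]
        ext x; simp
      map_add' := fun f f' => by
        apply MulOpposite.unop_injective
        refine LinearMap.ext fun g => ?_
        simp only [MulOpposite.unop_op, MulOpposite.unop_add, hΨ, LinearMap.add_apply]
        ext x; simp [hΨ]
      commutes' := fun c => by
        apply MulOpposite.unop_injective
        rw [MulOpposite.algebraMap_apply, MulOpposite.unop_op, MulOpposite.unop_op]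
        refine LinearMap.ext fun g => ?_
        rw [hΨ]
        ext x
        simp [Module.algebraMap_end_apply] }
  obtain ⟨q, hq⟩ := Submodule.exists_isCompl W
  set π' : V →ₗ[k] W := Submodule.linearProjOfIsCompl W q hq with hπ'
  have hπι : ∀ x : W, π' (x : V) = x := fun x =>
    Submodule.linearProjOfIsCompl_apply_left hq x
  have hbij : Function.Bijective Φ := by
    constructor
    · intro f f' hff'
      have h : Ψ f = Ψ f' := MulOpposite.op_injective hff'
      have h2 : W.subtype ∘ₗ f = W.subtype ∘ₗ f' := by
        rw [← hΨ f W.subtype, ← hΨ f' W.subtype, h]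
      ext x
      exact DFunLike.congr_fun h2 x
    · intro φop
      set φ := φop.unop with hφ
      have key : ∀ (a : Module.End k V) (g : W →ₗ[k] V), φ (a ∘ₗ g) = a ∘ₗ φ g :=
        fun a g => φ.map_smul a g
      set f : Module.End k W := π' ∘ₗ φ W.subtype with hf
      have hfι : W.subtype ∘ₗ f = φ W.subtype := by
        have h1 : (W.subtype ∘ₗ π') ∘ₗ W.subtype = W.subtype := by
          ext x; simp [hπι]
        calc W.subtype ∘ₗ f = (W.subtype ∘ₗ π') ∘ₗ φ W.subtype := by
              rw [hf]; ext x; simp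
          _ = φ ((W.subtype ∘ₗ π') ∘ₗ W.subtype) := (key _ _).symm
          _ = φ W.subtype := by rw [h1]
      refine ⟨f, ?_⟩
      rw [← MulOpposite.op_unop φop, ← hφ]
      apply MulOpposite.unop_injective
      show Ψ f = φ
      refine LinearMap.ext fun g => ?_
      rw [hΨ]
      have hgι : (g ∘ₗ π') ∘ₗ W.subtype = g := by
        ext y; simp [hπι]
      have hg : φ g = (g ∘ₗ π') ∘ₗ φ W.subtype := by
        conv_lhs => rw [← hgι]
        rw [key]
      rw [hg, ← hfι]
      ext x; simp [hπι]
  exact ⟨AlgEquiv.ofBijective Φ hbij, fun f g => rfl⟩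
end

section
/- Let H be a Hopf algebra over a field K, A an associative K-algebra with an H-module algebra structure ▷, and Φ : H → A a quantum moment map, i.e. h ▷ a = Σ Φ(h₍₁₎) a Φ(S(h₍₂₎)) for all h, a. If I ⊆ H is a Hopf ideal, then the multiplication of A descends to a well-defined associative algebra structure on the H-invariants (A / A·Φ(I))^H. -/
open scoped TensorProduct

/-- Let `H` be a Hopf algebra over `K`, `A` an `H`-module algebra with action `act`, and
`Φ : H → A` a quantum moment map, i.e. `h ▷ a = Σ Φ(h₍₁₎) a Φ(S h₍₂₎)`.  If `I ⊆ H` is a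
Hopf ideal and `J = A·Φ(I)` the left ideal it generates, then the multiplication of `A`
descends to a well-defined (associative) algebra structure on the `H`-invariants
`(A / A·Φ(I))^H`: the product of two invariant classes is invariant, and the product does
not depend on the chosen representatives. -/
theorem stmt16 (K H A : Type) [CommRing K] [Ring H] [HopfAlgebra K H]
    [Ring A] [Algebra K A]
    (act : H →ₗ[K] A →ₗ[K] A)
    -- `act` is a module action of the algebra `H`:
    (hact1 : ∀ a : A, act 1 a = a)
    (hactmul : ∀ (h h' : H) (a : A), act (h * h') a = act h (act h' a))
    -- `A` is an `H`-module algebra: `h ▷ (ab) = Σ (h₍₁₎ ▷ a)(h₍₂₎ ▷ b)`, `h ▷ 1 = ε(h)1`: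
    (hmodalg : ∀ (h : H) (a b : A),
      act h (a * b) = LinearMap.mul' K A
        (TensorProduct.map (act.flip a) (act.flip b) (Coalgebra.comul (R := K) h)))
    (hmodone : ∀ h : H, act h 1 = Coalgebra.counit (R := K) h • (1 : A))
    (Φ : H →ₐ[K] A)
    -- quantum moment map condition: `h ▷ a = Σ Φ(h₍₁₎) · a · Φ(S(h₍₂₎))`:
    (hmom : ∀ (h : H) (a : A),
      act h a = LinearMap.mul' K A
        (TensorProduct.map ((LinearMap.mulRight K a).comp Φ.toLinearMap)
          (Φ.toLinearMap ∘ₗ HopfAlgebra.antipode (R := K))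
          (Coalgebra.comul (R := K) h)))
    (I : Ideal H)
    -- `I` is a two-sided Hopf ideal:
    (hright : ∀ x ∈ I, ∀ h : H, x * h ∈ I)
    (hcomul : ∀ x ∈ I, Coalgebra.comul (R := K) x ∈
      (LinearMap.range (TensorProduct.map (Submodule.restrictScalars K I).subtype
          (LinearMap.id : H →ₗ[K] H)) ⊔
        LinearMap.range (TensorProduct.map (LinearMap.id : H →ₗ[K] H)
          (Submodule.restrictScalars K I).subtype)))
    (hcounit : ∀ x ∈ I, Coalgebra.counit (R := K) x = (0 : K))
    (hantipode : ∀ x ∈ I, HopfAlgebra.antipode (R := K) x ∈ I) :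
    -- `J = A·Φ(I)`; a class in `A/J` is `H`-invariant iff `h ▷ a - ε(h)a ∈ J` for all `h`
    ∀ (J : Submodule K A),
      J = Submodule.span K {y : A | ∃ a : A, ∃ x ∈ I, y = a * Φ x} →
      ((∀ a b : A,
          (∀ h : H, act h a - Coalgebra.counit (R := K) h • a ∈ J) →
          (∀ h : H, act h b - Coalgebra.counit (R := K) h • b ∈ J) →
          (∀ h : H, act h (a * b) - Coalgebra.counit (R := K) h • (a * b) ∈ J)) ∧
        (∀ a a' b b' : A,
          (∀ h : H, act h a - Coalgebra.counit (R := K) h • a ∈ J) →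
          (∀ h : H, act h a' - Coalgebra.counit (R := K) h • a' ∈ J) →
          (∀ h : H, act h b - Coalgebra.counit (R := K) h • b ∈ J) →
          (∀ h : H, act h b' - Coalgebra.counit (R := K) h • b' ∈ J) →
          a - a' ∈ J → b - b' ∈ J → a * b - a' * b' ∈ J)) := by
  intro J hJ
  -- generators of J
  have hgen : ∀ (a : A) (x : H), x ∈ I → a * Φ x ∈ J := by
    intro a x hx
    rw [hJ]
    exact Submodule.subset_span ⟨a, x, hx, rfl⟩
  -- J is a left ideal
  have hleft : ∀ (c : A), ∀ j ∈ J, c * j ∈ J := by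
    intro c j hj
    rw [hJ] at hj ⊢
    induction hj using Submodule.span_induction with
    | mem y hy =>
      obtain ⟨a, x, hx, rfl⟩ := hy
      rw [← mul_assoc]
      exact Submodule.subset_span ⟨c * a, x, hx, rfl⟩
    | zero => simpa using Submodule.zero_mem _
    | add y z _ _ hy hz => rw [mul_add]; exact Submodule.add_mem _ hy hz
    | smul k y _ hy => rw [mul_smul_comm]; exact Submodule.smul_mem _ _ hy
  -- J is stable under right multiplication by elements of Φ(H)
  have hPhi : ∀ (g : H), ∀ j ∈ J, j * Φ g ∈ J := by
    intro g j hj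
    rw [hJ] at hj ⊢
    induction hj using Submodule.span_induction with
    | mem y hy =>
      obtain ⟨a, x, hx, rfl⟩ := hy
      rw [mul_assoc, ← map_mul]
      exact Submodule.subset_span ⟨a, x * g, hright x hx g, rfl⟩
    | zero => simpa using Submodule.zero_mem _
    | add y z _ _ hy hz => rw [add_mul]; exact Submodule.add_mem _ hy hz
    | smul k y _ hy => rw [smul_mul_assoc]; exact Submodule.smul_mem _ _ hy
  -- moment map condition, elementwise
  have hmom' : ∀ (x : H) (a : A) (r : Coalgebra.Repr K x (H × H)),
      act x a = ∑ i ∈ r.index,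
        Φ (r.left i) * a * Φ (HopfAlgebra.antipode (R := K) (r.right i)) := by
    intro x a r
    rw [hmom, ← r.eq, map_sum, map_sum]
    simp
  -- module algebra condition, elementwise
  have hmodalg' : ∀ (h : H) (a b : A) (r : Coalgebra.Repr K h (H × H)),
      act h (a * b) = ∑ i ∈ r.index, act (r.left i) a * act (r.right i) b := by
    intro h a b r
    rw [hmodalg, ← r.eq, map_sum, map_sum]
    simp
  -- key computation:  Φ(x)·b = ∑ (x₍₁₎ ▷ b)·Φ(x₍₂₎)
  have hkey : ∀ (x : H) (b : A) (r : Coalgebra.Repr K x (H × H)),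
      Φ x * b = ∑ i ∈ r.index, act (r.left i) b * Φ (r.right i) := by
    intro x b r
    set r1 : ∀ i : r.ι, Coalgebra.Repr K (r.left i) (H × H) :=
      fun i => Coalgebra.Repr.arbitrary K (r.left i) with hr1
    set r2 : ∀ i : r.ι, Coalgebra.Repr K (r.right i) (H × H) :=
      fun i => Coalgebra.Repr.arbitrary K (r.right i) with hr2
    have step1 : ∑ i ∈ r.index, act (r.left i) b * Φ (r.right i)
        = ∑ i ∈ r.index, ∑ j ∈ (r1 i).index,
            Φ ((r1 i).left j) * b *
              (Φ (HopfAlgebra.antipode (R := K) ((r1 i).right j)) * Φ (r.right i)) := by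
      refine Finset.sum_congr rfl fun i _ => ?_
      rw [hmom' _ _ (r1 i), Finset.sum_mul]
      exact Finset.sum_congr rfl fun j _ => by rw [mul_assoc]
    have step2 := congrArg (LinearMap.mul' K A ∘ₗ TensorProduct.map
        ((LinearMap.mulRight K b).comp Φ.toLinearMap)
        (LinearMap.mul' K A ∘ₗ TensorProduct.map
          (Φ.toLinearMap ∘ₗ HopfAlgebra.antipode (R := K)) Φ.toLinearMap))
      (Coalgebra.sum_tmul_tmul_eq r r1 r2)
    simp only [map_sum, LinearMap.comp_apply, TensorProduct.map_tmul,
      LinearMap.mul'_apply, LinearMap.mulRight_apply, AlgHom.toLinearMap_apply] at step2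
    have step3 : ∀ i ∈ r.index, ∑ j ∈ (r2 i).index,
        Φ (r.left i) * b *
          (Φ (HopfAlgebra.antipode (R := K) ((r2 i).left j)) * Φ ((r2 i).right j))
        = Coalgebra.counit (R := K) (r.right i) • (Φ (r.left i) * b) := by
      intro i _
      rw [← Finset.mul_sum]
      have hsum : ∑ j ∈ (r2 i).index,
          Φ (HopfAlgebra.antipode (R := K) ((r2 i).left j)) * Φ ((r2 i).right j)
          = algebraMap K A (Coalgebra.counit (R := K) (r.right i)) := by
        calc ∑ j ∈ (r2 i).index,
              Φ (HopfAlgebra.antipode (R := K) ((r2 i).left j)) * Φ ((r2 i).right j)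
            = Φ (∑ j ∈ (r2 i).index,
                HopfAlgebra.antipode (R := K) ((r2 i).left j) * (r2 i).right j) := by
              rw [map_sum]
              exact Finset.sum_congr rfl fun j _ => (map_mul Φ _ _).symm
          _ = algebraMap K A (Coalgebra.counit (R := K) (r.right i)) := by
              rw [HopfAlgebra.sum_antipode_mul_eq_algebraMap_counit (r2 i), AlgHom.commutes]
      rw [hsum, ← Algebra.commutes, ← Algebra.smul_def]
    have step4 : ∑ i ∈ r.index,
        Coalgebra.counit (R := K) (r.right i) • (Φ (r.left i) * b) = Φ x * b := by
      have h0 := Coalgebra.sum_map_tmul_counit_eq (R := K) Φ x (repr := r)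
      have h1 := congrArg (TensorProduct.rid K A) h0
      simp only [map_sum, TensorProduct.rid_tmul, one_smul] at h1
      calc ∑ i ∈ r.index, Coalgebra.counit (R := K) (r.right i) • (Φ (r.left i) * b)
          = (∑ i ∈ r.index, Coalgebra.counit (R := K) (r.right i) • Φ (r.left i)) * b := by
            rw [Finset.sum_mul]
            exact Finset.sum_congr rfl fun i _ => (smul_mul_assoc _ _ _).symm
        _ = Φ x * b := by rw [h1]
    rw [step1, step2, Finset.sum_congr rfl step3, step4]
  -- ∑ ε(x₍₁₎)•x₍₂₎ = x, elementwise
  have hcounit_sum : ∀ (x : H) (r : Coalgebra.Repr K x (H × H)),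
      ∑ i ∈ r.index, Coalgebra.counit (R := K) (r.left i) • r.right i = x := by
    intro x r
    have h0 := Coalgebra.sum_counit_tmul_eq (R := K) r
    have h1 := congrArg (TensorProduct.lid K H) h0
    simpa only [map_sum, TensorProduct.lid_tmul, one_smul] using h1
  -- Φ(I)·b ⊆ J for invariant b
  have hPhiInv : ∀ (b : A),
      (∀ h : H, act h b - Coalgebra.counit (R := K) h • b ∈ J) →
      ∀ x ∈ I, Φ x * b ∈ J := by
    intro b hb x hx
    set r := Coalgebra.Repr.arbitrary K x with hr
    rw [hkey x b r]
    have split : ∀ i ∈ r.index, act (r.left i) b * Φ (r.right i)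
        = (act (r.left i) b - Coalgebra.counit (R := K) (r.left i) • b) * Φ (r.right i)
          + Coalgebra.counit (R := K) (r.left i) • (b * Φ (r.right i)) := by
      intro i _
      rw [sub_mul, smul_mul_assoc, sub_add_cancel]
    rw [Finset.sum_congr rfl split, Finset.sum_add_distrib]
    refine Submodule.add_mem _
      (Submodule.sum_mem _ fun i _ => hPhi _ _ (hb (r.left i))) ?_
    have hsum : ∑ i ∈ r.index,
        Coalgebra.counit (R := K) (r.left i) • (b * Φ (r.right i)) = b * Φ x := by
      calc ∑ i ∈ r.index, Coalgebra.counit (R := K) (r.left i) • (b * Φ (r.right i))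
          = b * Φ (∑ i ∈ r.index, Coalgebra.counit (R := K) (r.left i) • r.right i) := by
            rw [map_sum, Finset.mul_sum]
            exact Finset.sum_congr rfl fun i _ => by rw [map_smul, mul_smul_comm]
        _ = b * Φ x := by rw [hcounit_sum x r]
    rw [hsum]
    exact hgen b x hx
  -- J is stable under right multiplication by invariant elements
  have hmulInv : ∀ (b : A),
      (∀ h : H, act h b - Coalgebra.counit (R := K) h • b ∈ J) →
      ∀ j ∈ J, j * b ∈ J := by
    intro b hb j hj
    rw [hJ] at hj
    induction hj using Submodule.span_induction with
    | mem y hy =>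
      obtain ⟨a, x, hx, rfl⟩ := hy
      rw [mul_assoc]
      exact hleft a _ (hPhiInv b hb x hx)
    | zero => simpa using Submodule.zero_mem _
    | add y z _ _ hy hz => rw [add_mul]; exact Submodule.add_mem _ hy hz
    | smul k y _ hy => rw [smul_mul_assoc]; exact Submodule.smul_mem _ _ hy
  -- J is stable under right multiplication by g ▷ b for invariant b
  have hJact : ∀ (b : A),
      (∀ h : H, act h b - Coalgebra.counit (R := K) h • b ∈ J) →
      ∀ (g : H), ∀ j ∈ J, j * act g b ∈ J := by
    intro b hb g j hj
    have heq : j * act g b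
        = j * (act g b - Coalgebra.counit (R := K) g • b)
          + Coalgebra.counit (R := K) g • (j * b) := by
      rw [mul_sub, mul_smul_comm, sub_add_cancel]
    rw [heq]
    exact Submodule.add_mem _ (hleft j _ (hb g))
      (Submodule.smul_mem _ _ (hmulInv b hb j hj))
  constructor
  · -- the product of invariants is invariant
    intro a b ha hb h
    set r := Coalgebra.Repr.arbitrary K h with hr
    rw [hmodalg' h a b r]
    have split : ∀ i ∈ r.index, act (r.left i) a * act (r.right i) b
        = (act (r.left i) a - Coalgebra.counit (R := K) (r.left i) • a) * act (r.right i) b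
          + Coalgebra.counit (R := K) (r.left i) • (a * act (r.right i) b) := by
      intro i _
      rw [sub_mul, smul_mul_assoc, sub_add_cancel]
    rw [Finset.sum_congr rfl split, Finset.sum_add_distrib]
    have hsum : ∑ i ∈ r.index,
        Coalgebra.counit (R := K) (r.left i) • (a * act (r.right i) b) = a * act h b := by
      calc ∑ i ∈ r.index, Coalgebra.counit (R := K) (r.left i) • (a * act (r.right i) b)
          = a * act (∑ i ∈ r.index, Coalgebra.counit (R := K) (r.left i) • r.right i) b := by
            rw [map_sum, LinearMap.sum_apply, Finset.mul_sum]
            exact Finset.sum_congr rfl fun i _ => by rw [map_smul, LinearMap.smul_apply,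
              mul_smul_comm]
        _ = a * act h b := by rw [hcounit_sum h r]
    rw [hsum, add_sub_assoc]
    refine Submodule.add_mem _
      (Submodule.sum_mem _ fun i _ => hJact b hb (r.right i) _ (ha (r.left i))) ?_
    have heq2 : a * act h b - Coalgebra.counit (R := K) h • (a * b)
        = a * (act h b - Coalgebra.counit (R := K) h • b) := by
      rw [mul_sub, mul_smul_comm]
    rw [heq2]
    exact hleft a _ (hb h)
  · -- the product does not depend on representatives
    intro a a' b b' _ _ _ hb' hab hbb
    have heq : a * b - a' * b' = a * (b - b') + (a - a') * b' := by
      rw [mul_sub, sub_mul]; abel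
    rw [heq]
    exact Submodule.add_mem _ (hleft a _ hbb) (hmulInv b' hb' _ hab)
end
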